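/- arXiv:2505.13416 — 6 statements merged into one kernel-verified Lean document; each statement's English description precedes it below -/
import Mathlib

section
/- Let f: S → ℝ be layer-wise (L⁰, L¹)-smooth. Then for all X = [X_1,…,X_p] ∈ S and Y = [Y_1,…,Y_p] ∈ S, |f(Y) − f(X) − ⟨∇f(X), Y − X⟩| ≤ Σ_{i=1}^p ((L⁰_i + L¹_i ‖∇_i f(X)‖_{(i)⋆})/2) ‖Y_i − X_i‖_{(i)}². -/
noncomputable section
open Finset

/-- Trace inner product `⟨A,B⟩ = tr(AᵀB)` on `m×n` real matrices (viewed as functions). -/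
def tip {m n : ℕ} (A B : Fin m → Fin n → ℝ) : ℝ := ∑ a, ∑ b, A a b * B a b

/-- An arbitrary norm on the space of `m×n` real matrices. -/
structure MatNorm (m n : ℕ) where
  N : (Fin m → Fin n → ℝ) → ℝ
  pos : ∀ A, A ≠ 0 → 0 < N A
  zero : N 0 = 0
  smul : ∀ (c : ℝ) (A : Fin m → Fin n → ℝ), N (c • A) = |c| * N A
  triangle : ∀ A B, N (A + B) ≤ N A + N B

/-- The dual norm `‖A‖⋆ = sup_{‖Z‖ ≤ 1} ⟨A, Z⟩`. -/
def MatNorm.dual {m n : ℕ} (nn : MatNorm m n) (A : Fin m → Fin n → ℝ) : ℝ :=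
  sSup {r : ℝ | ∃ Z, nn.N Z ≤ 1 ∧ r = tip A Z}

variable {m n : ℕ}

lemma tip_sub_left (A B C : Fin m → Fin n → ℝ) : tip (A - B) C = tip A C - tip B C := by
  simp [tip, Pi.sub_apply, sub_mul, Finset.sum_sub_distrib]

lemma tip_neg_right (A B : Fin m → Fin n → ℝ) : tip A (-B) = -tip A B := by
  simp [tip, Pi.neg_apply, Finset.sum_neg_distrib]

lemma tip_neg_left (A B : Fin m → Fin n → ℝ) : tip (-A) B = -tip A B := by
  simp [tip, Pi.neg_apply, Finset.sum_neg_distrib]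

namespace MatNorm
variable (nn : MatNorm m n)

lemma nonneg (A : Fin m → Fin n → ℝ) : 0 ≤ nn.N A := by
  have h := nn.triangle A (-A)
  have h2 : nn.N (-A) = nn.N A := by
    have := nn.smul (-1) A
    simpa using this
  simp [nn.zero, h2] at h
  linarith

lemma neg_eq (A : Fin m → Fin n → ℝ) : nn.N (-A) = nn.N A := by
  have := nn.smul (-1) A
  simpa using this

lemma N_sum {ι : Type*} (s : Finset ι) (f : ι → Fin m → Fin n → ℝ) :
    nn.N (∑ i ∈ s, f i) ≤ ∑ i ∈ s, nn.N (f i) := by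
  classical
  induction s using Finset.cons_induction with
  | empty => simp [nn.zero]
  | cons a s ha ih =>
    rw [Finset.sum_cons, Finset.sum_cons]
    exact (nn.triangle _ _).trans (by linarith)

lemma N_le : ∃ K, ∀ A, nn.N A ≤ K * ‖A‖ := by
  classical
  set e : Fin m → Fin n → Fin m → Fin n → ℝ :=
    fun a b a' b' => if a' = a then (if b' = b then 1 else 0) else 0 with he
  refine ⟨∑ a, ∑ b, nn.N (e a b), fun A => ?_⟩
  have hdec : A = ∑ a, ∑ b, A a b • e a b := by
    funext a' b'
    simp [he, Finset.sum_apply, Pi.smul_apply]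
  calc nn.N A = nn.N (∑ a, ∑ b, A a b • e a b) := by rw [← hdec]
    _ ≤ ∑ a, nn.N (∑ b, A a b • e a b) := nn.N_sum _ _
    _ ≤ ∑ a, ∑ b, nn.N (A a b • e a b) := Finset.sum_le_sum fun a _ => nn.N_sum _ _
    _ ≤ ∑ a, ∑ b, ‖A‖ * nn.N (e a b) := by
        refine Finset.sum_le_sum fun a _ => Finset.sum_le_sum fun b _ => ?_
        rw [nn.smul]
        have h1 : |A a b| ≤ ‖A‖ := by
          calc |A a b| = ‖A a b‖ := (Real.norm_eq_abs _).symm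
            _ ≤ ‖A a‖ := norm_le_pi_norm _ _
            _ ≤ ‖A‖ := norm_le_pi_norm _ _
        exact mul_le_mul_of_nonneg_right h1 (nn.nonneg _)
    _ = (∑ a, ∑ b, nn.N (e a b)) * ‖A‖ := by
        rw [Finset.sum_mul]
        exact Finset.sum_congr rfl fun a _ => by rw [Finset.sum_mul]; exact Finset.sum_congr rfl fun b _ => mul_comm _ _

lemma lower : ∃ c > 0, ∀ Z, c * ‖Z‖ ≤ nn.N Z := by
  rcases subsingleton_or_nontrivial (Fin m → Fin n → ℝ) with h | h
  · refine ⟨1, one_pos, fun Z => ?_⟩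
    have : Z = 0 := Subsingleton.elim _ _
    simp [this, nn.zero]
  · obtain ⟨K, hK⟩ := nn.N_le
    have hcont : Continuous nn.N := by
      have hlip : ∀ A B, |nn.N A - nn.N B| ≤ K * ‖A - B‖ := by
        intro A B
        rw [abs_sub_le_iff]
        constructor
        · have := nn.triangle (A - B) B
          simp only [sub_add_cancel] at this
          linarith [hK (A - B)]
        · have := nn.triangle (B - A) A
          simp only [sub_add_cancel] at this
          have h2 := hK (B - A)
          rw [norm_sub_rev] at h2
          linarith
      have hK0 : 0 ≤ K := by
        obtain ⟨W, hW⟩ := exists_ne (0 : Fin m → Fin n → ℝ)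
        have := (hK W)
        nlinarith [nn.pos W hW, norm_pos_iff.mpr hW, this]
      apply LipschitzWith.continuous (K := Real.toNNReal K)
      intro A B
      rw [edist_dist, edist_dist]
      have := hlip A B
      simp only [Real.dist_eq, dist_eq_norm]
      rw [← ENNReal.ofReal_coe_nnreal]
      rw [← ENNReal.ofReal_mul (by positivity)]
      apply ENNReal.ofReal_le_ofReal
      calc |nn.N A - nn.N B| ≤ K * ‖A - B‖ := this
        _ ≤ (Real.toNNReal K : ℝ) * ‖A - B‖ := by
            apply mul_le_mul_of_nonneg_right _ (norm_nonneg _)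
            exact Real.le_coe_toNNReal K
    have hcomp : IsCompact (Metric.sphere (0 : Fin m → Fin n → ℝ) 1) := isCompact_sphere 0 1
    have hne : (Metric.sphere (0 : Fin m → Fin n → ℝ) 1).Nonempty := by
      obtain ⟨Z, hZ⟩ := exists_norm_eq (Fin m → Fin n → ℝ) (zero_le_one (α := ℝ))
      exact ⟨Z, by simpa [mem_sphere_iff_norm] using hZ⟩
    obtain ⟨Z0, hZ0mem, hZ0min⟩ := hcomp.exists_isMinOn hne hcont.continuousOn
    have hZ0ne : Z0 ≠ 0 := by
      intro h0
      rw [mem_sphere_iff_norm, h0] at hZ0mem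
      simp at hZ0mem
    refine ⟨nn.N Z0, nn.pos Z0 hZ0ne, fun Z => ?_⟩
    rcases eq_or_ne Z 0 with rfl | hZ
    · simp [nn.zero]
    · have hnz : ‖Z‖ ≠ 0 := norm_ne_zero_iff.mpr hZ
      have hZ' : (‖Z‖⁻¹ • Z) ∈ Metric.sphere (0 : Fin m → Fin n → ℝ) 1 := by
        rw [mem_sphere_iff_norm, sub_zero, norm_smul]
        simp [abs_of_nonneg (inv_nonneg.mpr (norm_nonneg Z)), inv_mul_cancel₀ hnz]
      have hmin : nn.N Z0 ≤ nn.N (‖Z‖⁻¹ • Z) := hZ0min hZ'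
      have heq : nn.N (‖Z‖⁻¹ • Z) = ‖Z‖⁻¹ * nn.N Z := by
        rw [nn.smul, abs_of_nonneg (inv_nonneg.mpr (norm_nonneg Z))]
      rw [heq] at hmin
      have this := hmin
      have hpos : (0:ℝ) < ‖Z‖ := norm_pos_iff.mpr hZ
      rw [mul_comm]
      calc ‖Z‖ * nn.N Z0 ≤ ‖Z‖ * (‖Z‖⁻¹ * nn.N Z) := by
            exact mul_le_mul_of_nonneg_left this (le_of_lt hpos)
        _ = nn.N Z := by field_simp

lemma bddAbove (A : Fin m → Fin n → ℝ) :
    BddAbove {r : ℝ | ∃ Z, nn.N Z ≤ 1 ∧ r = tip A Z} := by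
  obtain ⟨c, hc, hlow⟩ := nn.lower
  refine ⟨(∑ a, ∑ b, |A a b|) / c, ?_⟩
  rintro r ⟨Z, hZ, rfl⟩
  have hZn : ‖Z‖ ≤ 1 / c := by
    have := hlow Z
    rw [le_div_iff₀ hc, mul_comm]
    linarith
  calc tip A Z ≤ ∑ a, ∑ b, |A a b| * |Z a b| := by
        refine Finset.sum_le_sum fun a _ => Finset.sum_le_sum fun b _ => ?_
        calc A a b * Z a b ≤ |A a b * Z a b| := le_abs_self _
          _ = |A a b| * |Z a b| := abs_mul _ _
    _ ≤ ∑ a, ∑ b, |A a b| * (1 / c) := by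
        refine Finset.sum_le_sum fun a _ => Finset.sum_le_sum fun b _ => ?_
        refine mul_le_mul_of_nonneg_left ?_ (abs_nonneg _)
        calc |Z a b| = ‖Z a b‖ := (Real.norm_eq_abs _).symm
          _ ≤ ‖Z a‖ := norm_le_pi_norm _ _
          _ ≤ ‖Z‖ := norm_le_pi_norm _ _
          _ ≤ 1 / c := hZn
    _ = (∑ a, ∑ b, |A a b|) / c := by
        rw [Finset.sum_div]
        exact Finset.sum_congr rfl fun a _ => by
          rw [Finset.sum_div]
          exact Finset.sum_congr rfl fun b _ => by ring

lemma dual_nonneg (A : Fin m → Fin n → ℝ) : 0 ≤ nn.dual A := by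
  apply le_csSup (nn.bddAbove A)
  exact ⟨0, by simp [nn.zero, tip]⟩

lemma tip_le_dual (A B : Fin m → Fin n → ℝ) : tip A B ≤ nn.dual A * nn.N B := by
  rcases eq_or_ne B 0 with rfl | hB
  · simp [tip, nn.zero]
  · have hpos := nn.pos B hB
    have hmem : tip A ((nn.N B)⁻¹ • B) ∈ {r : ℝ | ∃ Z, nn.N Z ≤ 1 ∧ r = tip A Z} := by
      refine ⟨_, ?_, rfl⟩
      rw [nn.smul, abs_of_nonneg (inv_nonneg.mpr (le_of_lt hpos)), inv_mul_cancel₀ (ne_of_gt hpos)]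
    have := le_csSup (nn.bddAbove A) hmem
    have heq : tip A ((nn.N B)⁻¹ • B) = (nn.N B)⁻¹ * tip A B := by
      simp only [tip, Pi.smul_apply, smul_eq_mul, Finset.mul_sum]
      exact Finset.sum_congr rfl fun a _ => Finset.sum_congr rfl fun b _ => by ring
    rw [heq] at this
    calc tip A B = nn.N B * ((nn.N B)⁻¹ * tip A B) := by field_simp
      _ ≤ nn.N B * nn.dual A := mul_le_mul_of_nonneg_left this (le_of_lt hpos)
      _ = nn.dual A * nn.N B := mul_comm _ _

lemma abs_tip_le_dual (A B : Fin m → Fin n → ℝ) : |tip A B| ≤ nn.dual A * nn.N B := by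
  rw [abs_le]
  constructor
  · have := nn.tip_le_dual A (-B)
    rw [tip_neg_right, nn.neg_eq] at this
    linarith
  · exact nn.tip_le_dual A B

lemma dual_neg (A : Fin m → Fin n → ℝ) : nn.dual (-A) = nn.dual A := by
  unfold MatNorm.dual
  congr 1
  ext r
  constructor
  · rintro ⟨Z, hZ, rfl⟩
    exact ⟨-Z, by rwa [nn.neg_eq], by simp [tip_neg_left, tip_neg_right]⟩
  · rintro ⟨Z, hZ, rfl⟩
    exact ⟨-Z, by rwa [nn.neg_eq], by simp [tip_neg_left, tip_neg_right]⟩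

end MatNorm


/-- If `f` is layer-wise `(L⁰, L¹)`-smooth, then for all `X, Y`,
`|f(Y) − f(X) − ⟨∇f(X), Y − X⟩| ≤ Σᵢ ((L⁰ᵢ + L¹ᵢ‖∇ᵢf(X)‖⋆)/2)‖Yᵢ − Xᵢ‖²`. -/
theorem stmt_0 {p : ℕ} {m n : Fin p → ℕ}
    (nn : ∀ i, MatNorm (m i) (n i))
    (f : (∀ i, Fin (m i) → Fin (n i) → ℝ) → ℝ)
    (g : (∀ i, Fin (m i) → Fin (n i) → ℝ) → ∀ i, Fin (m i) → Fin (n i) → ℝ)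
    (hdiff : ContDiff ℝ 1 f)
    (hgrad : ∀ X H, fderiv ℝ f X H = ∑ i, tip (g X i) (H i))
    (L0 L1 : Fin p → ℝ) (hL0 : ∀ i, 0 ≤ L0 i) (hL1 : ∀ i, 0 ≤ L1 i)
    (hsmooth : ∀ i X Y, (nn i).dual (g X i - g Y i)
      ≤ (L0 i + L1 i * (nn i).dual (g X i)) * (nn i).N (X i - Y i)) :
    ∀ X Y, |f Y - f X - ∑ i, tip (g X i) (Y i - X i)|
      ≤ ∑ i, (L0 i + L1 i * (nn i).dual (g X i)) / 2 * ((nn i).N (Y i - X i)) ^ 2 := by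
  intro X Y
  classical
  set D : ∀ i, Fin (m i) → Fin (n i) → ℝ := Y - X with hD
  set γ : ℝ → ∀ i, Fin (m i) → Fin (n i) → ℝ := fun t => X + t • D with hγ
  set ψ : ℝ → ℝ := fun t => fderiv ℝ f (γ t) D with hψ
  have hγd : ∀ t : ℝ, HasDerivAt γ D t := by
    intro t
    have h1 : HasDerivAt (fun t : ℝ => t • D) ((1:ℝ) • D) t := (hasDerivAt_id t).smul_const D
    rw [one_smul] at h1
    simpa [hγ] using h1.const_add X
  have hφd : ∀ t : ℝ, HasDerivAt (fun s => f (γ s)) (ψ t) t := fun t =>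
    ((hdiff.differentiable one_ne_zero).differentiableAt.hasFDerivAt (x := γ t)).comp_hasDerivAt t (hγd t)
  have hψc : Continuous ψ := by
    have hγc : Continuous γ := by
      apply continuous_const.add
      exact continuous_id.smul continuous_const
    exact ((hdiff.continuous_fderiv one_ne_zero).comp hγc).clm_apply continuous_const
  have hγ0 : γ 0 = X := by simp [hγ]
  have hγ1 : γ 1 = Y := by simp [hγ, hD]
  have hint : f Y - f X = ∫ t in (0:ℝ)..1, ψ t := by
    have := intervalIntegral.integral_eq_sub_of_hasDerivAt
      (f := fun s => f (γ s)) (f' := ψ) (a := 0) (b := 1)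
      (fun t _ => hφd t) (hψc.intervalIntegrable 0 1)
    rw [this]
    simp only [hγ0, hγ1]
  have hψ0 : ψ 0 = ∑ i, tip (g X i) (Y i - X i) := by
    rw [hψ]
    simp only [hγ0, hgrad X D]
    exact Finset.sum_congr rfl fun i _ => by rw [hD]; rfl
  have key : f Y - f X - ∑ i, tip (g X i) (Y i - X i) = ∫ t in (0:ℝ)..1, (ψ t - ψ 0) := by
    rw [intervalIntegral.integral_sub (hψc.intervalIntegrable 0 1)
      (intervalIntegrable_const), intervalIntegral.integral_const, ← hint, hψ0]
    simp
  set C : ℝ := ∑ i, (L0 i + L1 i * (nn i).dual (g X i)) * ((nn i).N (Y i - X i)) ^ 2 with hC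
  have hpt : ∀ t ∈ Set.uIoc (0:ℝ) 1, ‖ψ t - ψ 0‖ ≤ C * t := by
    intro t ht
    rw [Set.uIoc_of_le (by norm_num : (0:ℝ) ≤ 1)] at ht
    obtain ⟨ht0, ht1⟩ := ht
    have hdiff' : ψ t - ψ 0 = ∑ i, tip (g (γ t) i - g X i) (D i) := by
      rw [hψ]
      simp only [hγ0, hgrad (γ t) D, hgrad X D, ← Finset.sum_sub_distrib]
      exact Finset.sum_congr rfl fun i _ => (tip_sub_left _ _ _).symm
    rw [hdiff', Real.norm_eq_abs, hC, Finset.sum_mul]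
    refine (Finset.abs_sum_le_sum_abs _ _).trans (Finset.sum_le_sum fun i _ => ?_)
    have hbd := (nn i).abs_tip_le_dual (g (γ t) i - g X i) (D i)
    have hdualeq : (nn i).dual (g (γ t) i - g X i) = (nn i).dual (g X i - g (γ t) i) := by
      rw [← (nn i).dual_neg, neg_sub]
    have hsm := hsmooth i X (γ t)
    have hNγ : (nn i).N (X i - γ t i) = t * (nn i).N (Y i - X i) := by
      have hx : X i - γ t i = (-t) • (Y i - X i) := by
        funext a b
        simp only [hγ, hD, Pi.sub_apply, Pi.add_apply, Pi.smul_apply, smul_eq_mul, Pi.neg_apply,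
          neg_mul, neg_smul]
        ring
      rw [hx, (nn i).smul, abs_neg, abs_of_nonneg (le_of_lt ht0)]
    have hDi : D i = Y i - X i := by rw [hD]; rfl
    have hcoef : 0 ≤ L0 i + L1 i * (nn i).dual (g X i) :=
      add_nonneg (hL0 i) (mul_nonneg (hL1 i) ((nn i).dual_nonneg _))
    have hN0 : 0 ≤ (nn i).N (Y i - X i) := (nn i).nonneg _
    calc |tip (g (γ t) i - g X i) (D i)|
        ≤ (nn i).dual (g (γ t) i - g X i) * (nn i).N (D i) := hbd
      _ = (nn i).dual (g X i - g (γ t) i) * (nn i).N (Y i - X i) := by rw [hdualeq, hDi]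
      _ ≤ ((L0 i + L1 i * (nn i).dual (g X i)) * (t * (nn i).N (Y i - X i)))
            * (nn i).N (Y i - X i) := by
          refine mul_le_mul_of_nonneg_right ?_ hN0
          rw [← hNγ]
          exact hsm
      _ = (L0 i + L1 i * (nn i).dual (g X i)) * (nn i).N (Y i - X i) ^ 2 * t := by ring
  have hbound : |f Y - f X - ∑ i, tip (g X i) (Y i - X i)| ≤ C / 2 := by
    rw [key, ← Real.norm_eq_abs]
    have hInt : IntervalIntegrable (fun t => C * t) MeasureTheory.volume 0 1 :=
      (continuous_const.mul continuous_id).intervalIntegrable 0 1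
    have := intervalIntegral.norm_integral_le_of_norm_le
      (f := fun t => ψ t - ψ 0) (g := fun t => C * t) (μ := MeasureTheory.volume)
      (zero_le_one (α := ℝ)) (Filter.Eventually.of_forall fun t ht => hpt t (by rwa [Set.uIoc_of_le (zero_le_one (α := ℝ))])) hInt
    refine this.trans ?_
    have hC0 : 0 ≤ C := by
      rw [hC]
      exact Finset.sum_nonneg fun i _ => mul_nonneg
        (add_nonneg (hL0 i) (mul_nonneg (hL1 i) ((nn i).dual_nonneg _)))
        (sq_nonneg _)
    rw [intervalIntegral.integral_const_mul, integral_id]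
    nlinarith
  refine hbound.trans (le_of_eq ?_)
  rw [hC, Finset.sum_div]
  exact Finset.sum_congr rfl fun i _ => by ring
end
end

section
/- Let q ∈ (0,1), p ≥ 0 with p ≥ q, and let a, b be natural numbers with 2 ≤ a ≤ b. Then Σ_{k=a−1}^{b−1} (1+k)^{−p} ∏_{τ=a−1}^{k} (1 − (τ+1)^{−q}) ≤ (a−1)^{q−p} · exp((a^{1−q} − (a−1)^{1−q})/(1−q)). -/
open Finset

private lemma aux_key (q : ℝ) (hq0 : 0 < q) (m : ℕ) (hm : 1 ≤ m) :
    ∀ n, m ≤ n →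
      ∑ k ∈ Finset.Icc m n, ((1 : ℝ) + (k : ℝ)) ^ (-q) *
          ∏ τ ∈ Finset.Icc m k, (1 - ((τ : ℝ) + 1) ^ (-q))
        ≤ 1 - ∏ τ ∈ Finset.Icc m n, (1 - ((τ : ℝ) + 1) ^ (-q)) := by
  have hfac : ∀ τ : ℕ, m ≤ τ → 0 ≤ 1 - ((τ : ℝ) + 1) ^ (-q) := by
    intro τ hτ
    have h1 : (1 : ℝ) ≤ (τ : ℝ) + 1 := by
      have := Nat.cast_nonneg (α := ℝ) τ; linarith
    have := Real.rpow_le_one_of_one_le_of_nonpos (z := -q) h1 (by linarith)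
    linarith
  have hprod : ∀ n : ℕ, 0 ≤ ∏ τ ∈ Finset.Icc m n, (1 - ((τ : ℝ) + 1) ^ (-q)) := by
    intro n
    exact Finset.prod_nonneg fun τ hτ => hfac τ (Finset.mem_Icc.mp hτ).1
  intro n hn
  induction n with
  | zero => omega
  | succ n ih =>
    rcases Nat.lt_or_ge m (n + 1) with h | h
    · have hmn : m ≤ n := by omega
      rw [Finset.sum_Icc_succ_top (by omega : m ≤ n+1), Finset.prod_Icc_succ_top (by omega : m ≤ n+1)]
      have h1 := ih hmn
      set P := ∏ τ ∈ Finset.Icc m n, (1 - ((τ : ℝ) + 1) ^ (-q)) with hP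
      have hP0 : 0 ≤ P := hprod n
      have hx0 : (0:ℝ) ≤ ((1:ℝ) + ((n+1 : ℕ) : ℝ)) ^ (-q) := Real.rpow_nonneg (by positivity) _
      have hx1 : ((1:ℝ) + ((n+1 : ℕ) : ℝ)) ^ (-q) ≤ 1 :=
        Real.rpow_le_one_of_one_le_of_nonpos
          (by have := Nat.cast_nonneg (α := ℝ) (n+1); linarith) (by linarith)
      have hcast : (((n+1 : ℕ) : ℝ) + 1) = (1:ℝ) + ((n+1 : ℕ) : ℝ) := by ring
      rw [hcast]
      nlinarith [mul_nonneg hx0 hP0]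
    · have hmeq : m = n + 1 := by omega
      subst hmeq
      simp only [Finset.Icc_self, Finset.sum_singleton, Finset.prod_singleton]
      have hx0 : (0:ℝ) ≤ ((1:ℝ) + ((n+1 : ℕ) : ℝ)) ^ (-q) := Real.rpow_nonneg (by positivity) _
      have hx1 : ((1:ℝ) + ((n+1 : ℕ) : ℝ)) ^ (-q) ≤ 1 :=
        Real.rpow_le_one_of_one_le_of_nonpos
          (by have := Nat.cast_nonneg (α := ℝ) (n+1); linarith) (by linarith)
      have hcast : (((n+1 : ℕ) : ℝ) + 1) = (1:ℝ) + ((n+1 : ℕ) : ℝ) := by ring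
      rw [hcast]
      nlinarith

/-- Technical Lemma (Hübler et al.): for `q ∈ (0,1)`, `p ≥ 0`, `p ≥ q`, and naturals
`2 ≤ a ≤ b`,
`Σ_{k=a−1}^{b−1} (1+k)^{−p} ∏_{τ=a−1}^{k} (1 − (τ+1)^{−q})
  ≤ (a−1)^{q−p} exp((a^{1−q} − (a−1)^{1−q})/(1−q))`. -/
theorem stmt_3 (q p : ℝ) (hq0 : 0 < q) (hq1 : q < 1) (hp0 : 0 ≤ p) (hpq : q ≤ p)
    (a b : ℕ) (ha : 2 ≤ a) (hab : a ≤ b) :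
    ∑ k ∈ Finset.Icc (a - 1) (b - 1),
        ((1 : ℝ) + (k : ℝ)) ^ (-p) *
          ∏ τ ∈ Finset.Icc (a - 1) k, (1 - ((τ : ℝ) + 1) ^ (-q))
      ≤ ((a : ℝ) - 1) ^ (q - p) *
        Real.exp (((a : ℝ) ^ (1 - q) - ((a : ℝ) - 1) ^ (1 - q)) / (1 - q)) := by
  set m := a - 1 with hm
  have hm1 : 1 ≤ m := by omega
  have hmcast : ((m : ℝ)) = (a : ℝ) - 1 := by
    have : (m : ℝ) = ((a : ℕ) : ℝ) - 1 := by
      rw [hm]; push_cast [Nat.cast_sub (by omega : 1 ≤ a)]; ring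
    simpa using this
  have hmpos : (0:ℝ) < (m : ℝ) := by exact_mod_cast hm1
  have hfac : ∀ τ : ℕ, m ≤ τ → 0 ≤ 1 - ((τ : ℝ) + 1) ^ (-q) := by
    intro τ hτ
    have h1 : (1 : ℝ) ≤ (τ : ℝ) + 1 := by
      have := Nat.cast_nonneg (α := ℝ) τ; linarith
    have := Real.rpow_le_one_of_one_le_of_nonpos (z := -q) h1 (by linarith)
    linarith
  have hprod : ∀ n : ℕ, 0 ≤ ∏ τ ∈ Finset.Icc m n, (1 - ((τ : ℝ) + 1) ^ (-q)) := by
    intro n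
    exact Finset.prod_nonneg fun τ hτ => hfac τ (Finset.mem_Icc.mp hτ).1
  -- step 1: bound each term
  have hstep : ∑ k ∈ Finset.Icc m (b - 1),
        ((1 : ℝ) + (k : ℝ)) ^ (-p) *
          ∏ τ ∈ Finset.Icc m k, (1 - ((τ : ℝ) + 1) ^ (-q))
      ≤ (m : ℝ) ^ (q - p) * ∑ k ∈ Finset.Icc m (b - 1),
        ((1 : ℝ) + (k : ℝ)) ^ (-q) *
          ∏ τ ∈ Finset.Icc m k, (1 - ((τ : ℝ) + 1) ^ (-q)) := by
    rw [Finset.mul_sum]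
    apply Finset.sum_le_sum
    intro k hk
    have hkm : m ≤ k := (Finset.mem_Icc.mp hk).1
    have hkpos : (0:ℝ) < 1 + (k : ℝ) := by positivity
    have h1 : ((1:ℝ) + (k:ℝ)) ^ (-p) = ((1:ℝ) + (k:ℝ)) ^ (q - p) * ((1:ℝ) + (k:ℝ)) ^ (-q) := by
      rw [← Real.rpow_add hkpos]; ring_nf
    rw [h1, mul_assoc]
    apply mul_le_mul_of_nonneg_right
    · apply Real.rpow_le_rpow_of_nonpos hmpos _ (by linarith)
      have : (m : ℝ) ≤ (k : ℝ) := by exact_mod_cast hkm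
      linarith
    · exact mul_nonneg (Real.rpow_nonneg (by positivity) _) (hprod k)
  have hkey := aux_key q hq0 m hm1 (b - 1) (by omega)
  have hsum1 : ∑ k ∈ Finset.Icc m (b - 1),
        ((1 : ℝ) + (k : ℝ)) ^ (-q) *
          ∏ τ ∈ Finset.Icc m k, (1 - ((τ : ℝ) + 1) ^ (-q)) ≤ 1 := by
    have := hprod (b - 1)
    linarith
  have hmq : (0:ℝ) ≤ (m : ℝ) ^ (q - p) := Real.rpow_nonneg hmpos.le _
  have hLHS : ∑ k ∈ Finset.Icc m (b - 1),
        ((1 : ℝ) + (k : ℝ)) ^ (-p) *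
          ∏ τ ∈ Finset.Icc m k, (1 - ((τ : ℝ) + 1) ^ (-q))
      ≤ (m : ℝ) ^ (q - p) := by
    calc _ ≤ (m : ℝ) ^ (q - p) * (∑ k ∈ Finset.Icc m (b - 1),
        ((1 : ℝ) + (k : ℝ)) ^ (-q) *
          ∏ τ ∈ Finset.Icc m k, (1 - ((τ : ℝ) + 1) ^ (-q))) := hstep
    _ ≤ (m : ℝ) ^ (q - p) * 1 := mul_le_mul_of_nonneg_left hsum1 hmq
    _ = _ := mul_one _
  have hexp : (1:ℝ) ≤ Real.exp (((a : ℝ) ^ (1 - q) - ((a : ℝ) - 1) ^ (1 - q)) / (1 - q)) := by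
    rw [Real.one_le_exp_iff]
    apply div_nonneg _ (by linarith)
    have : ((a : ℝ) - 1) ^ (1 - q) ≤ (a : ℝ) ^ (1 - q) := by
      apply Real.rpow_le_rpow (by rw [← hmcast]; exact hmpos.le) (by linarith) (by linarith)
    linarith
  calc _ ≤ (m : ℝ) ^ (q - p) := hLHS
    _ = ((a : ℝ) - 1) ^ (q - p) * 1 := by rw [hmcast, mul_one]
    _ ≤ _ := mul_le_mul_of_nonneg_left hexp (by rw [← hmcast]; exact hmq)
end

section
/- Let t > 0 and for integers k ≥ 0 set β^k = 1 − (k+1)^{−1/2} and t^k = t (k+1)^{−3/4}. Then for every integer K ≥ 1, Σ_{k=0}^{K−1} t^k · sqrt( Σ_{τ=0}^{k} (1−β^τ)² ∏_{κ=τ+1}^{k} (β^κ)² ) ≤ t (7/2 + sqrt(2e²) · log K). -/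
open Finset

private lemma rpow_neg_half_eq (x : ℝ) (hx : 0 ≤ x) :
    x ^ (-(1 / 2 : ℝ)) = (Real.sqrt x)⁻¹ := by
  rw [Real.rpow_neg hx, Real.sqrt_eq_rpow]

private lemma S_le (β : ℕ → ℝ)
    (hβ : ∀ k, β k = 1 - ((k : ℝ) + 1) ^ (-(1 / 2 : ℝ))) (k : ℕ) :
    ∑ τ ∈ Finset.range (k + 1),
        (1 - β τ) ^ 2 * ∏ κ ∈ Finset.Icc (τ + 1) k, (β κ) ^ 2
      ≤ ((k : ℝ) + 1) ^ (-(1 / 2 : ℝ)) := by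
  induction k with
  | zero => simp [hβ 0]
  | succ k ih =>
    have hrec : ∑ τ ∈ Finset.range (k + 1 + 1),
        (1 - β τ) ^ 2 * ∏ κ ∈ Finset.Icc (τ + 1) (k + 1), (β κ) ^ 2
        = (β (k + 1)) ^ 2 * (∑ τ ∈ Finset.range (k + 1),
            (1 - β τ) ^ 2 * ∏ κ ∈ Finset.Icc (τ + 1) k, (β κ) ^ 2)
          + (1 - β (k + 1)) ^ 2 := by
      rw [Finset.sum_range_succ]
      have hempty : Finset.Icc (k + 1 + 1) (k + 1) = (∅ : Finset ℕ) :=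
        Finset.Icc_eq_empty (by omega)
      rw [hempty, Finset.prod_empty, mul_one, Finset.mul_sum]
      congr 1
      refine Finset.sum_congr rfl fun τ hτ => ?_
      have hτk : τ + 1 ≤ k + 1 := by
        have := Finset.mem_range.mp hτ; omega
      rw [Finset.prod_Icc_succ_top hτk]
      ring
    rw [hrec]
    set S := ∑ τ ∈ Finset.range (k + 1),
        (1 - β τ) ^ 2 * ∏ κ ∈ Finset.Icc (τ + 1) k, (β κ) ^ 2 with hSdef
    set a : ℝ := (k : ℝ) + 1 with ha
    have ha1 : (1 : ℝ) ≤ a := by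
      have : (0:ℝ) ≤ (k:ℝ) := Nat.cast_nonneg k
      rw [ha]; linarith
    have ha0 : (0 : ℝ) < a := by linarith
    have hcast : ((k + 1 : ℕ) : ℝ) + 1 = a + 1 := by push_cast [ha]; ring
    set sa := Real.sqrt a with hsa
    set v := Real.sqrt (a + 1) with hv
    have hsa2 : sa ^ 2 = a := Real.sq_sqrt ha0.le
    have hv2 : v ^ 2 = a + 1 := Real.sq_sqrt (by linarith)
    have hsa1 : (1 : ℝ) ≤ sa := by rw [hsa]; exact Real.one_le_sqrt.mpr ha1
    have hv1 : (1 : ℝ) ≤ v := by rw [hv]; exact Real.one_le_sqrt.mpr (by linarith)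
    have hra : a ^ (-(1 / 2 : ℝ)) = sa⁻¹ := rpow_neg_half_eq a ha0.le
    have hra1 : (a + 1) ^ (-(1 / 2 : ℝ)) = v⁻¹ := rpow_neg_half_eq (a + 1) (by linarith)
    have hβk : β (k + 1) = 1 - v⁻¹ := by rw [hβ (k + 1), hcast, hra1]
    rw [hβk, hcast, hra1]
    rw [hra] at ih
    have hvpos : (0 : ℝ) < v := by linarith
    have hsapos : (0 : ℝ) < sa := by linarith
    have hvsa : v - 1 ≤ sa := by
      have h2 : a + 1 ≤ (sa + 1) ^ 2 := by nlinarith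
      have h3 : v ≤ sa + 1 := by
        rw [hv]
        calc Real.sqrt (a + 1) ≤ Real.sqrt ((sa + 1) ^ 2) := Real.sqrt_le_sqrt h2
          _ = sa + 1 := Real.sqrt_sq (by linarith)
      linarith
    have hS : S ≤ sa⁻¹ := ih
    have step1 : (1 - v⁻¹) ^ 2 * S ≤ (1 - v⁻¹) ^ 2 * sa⁻¹ :=
      mul_le_mul_of_nonneg_left hS (sq_nonneg _)
    have key : (1 - v⁻¹) ^ 2 * sa⁻¹ + (1 - (1 - v⁻¹)) ^ 2 ≤ v⁻¹ := by
      have hkey : (v - 1) ^ 2 + sa ≤ sa * v := by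
        nlinarith [mul_le_mul_of_nonneg_left hvsa (show (0:ℝ) ≤ v - 1 by linarith)]
      have e1 : (1 : ℝ) - v⁻¹ = (v - 1) / v := by field_simp
      rw [e1, div_pow, ← sub_nonneg]
      have heq : v⁻¹ - ((v - 1) ^ 2 / v ^ 2 * sa⁻¹ + (1 - (v - 1) / v) ^ 2)
          = (v - 1) * (sa - (v - 1)) / (v ^ 2 * sa) := by
        field_simp
        ring
      rw [heq]
      apply div_nonneg
      · nlinarith
      · positivity
    linarith

/-- Technical Lemma (Hübler et al., part (i)): with `βᵏ = 1 − (k+1)^{−1/2}` and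
`tᵏ = t(k+1)^{−3/4}` for `t > 0`, for every `K ≥ 1`,
`Σ_{k=0}^{K−1} tᵏ √(Σ_{τ=0}^{k} (1−β^τ)² ∏_{κ=τ+1}^{k} (β^κ)²) ≤ t(7/2 + √(2e²) log K)`. -/
theorem stmt_4 (t : ℝ) (ht : 0 < t)
    (β : ℕ → ℝ) (hβ : ∀ k, β k = 1 - ((k : ℝ) + 1) ^ (-(1 / 2 : ℝ)))
    (ts : ℕ → ℝ) (hts : ∀ k, ts k = t * ((k : ℝ) + 1) ^ (-(3 / 4 : ℝ)))
    (K : ℕ) (hK : 1 ≤ K) :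
    ∑ k ∈ Finset.range K,
        ts k * Real.sqrt (∑ τ ∈ Finset.range (k + 1),
          (1 - β τ) ^ 2 * ∏ κ ∈ Finset.Icc (τ + 1) k, (β κ) ^ 2)
      ≤ t * (7 / 2 + Real.sqrt (2 * Real.exp 1 ^ 2) * Real.log K) := by
  have hterm : ∀ k : ℕ, ts k * Real.sqrt (∑ τ ∈ Finset.range (k + 1),
      (1 - β τ) ^ 2 * ∏ κ ∈ Finset.Icc (τ + 1) k, (β κ) ^ 2)
      ≤ t * ((k : ℝ) + 1)⁻¹ := by
    intro k
    have hx : (0 : ℝ) < (k : ℝ) + 1 := by positivity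
    have h1 : Real.sqrt (∑ τ ∈ Finset.range (k + 1),
        (1 - β τ) ^ 2 * ∏ κ ∈ Finset.Icc (τ + 1) k, (β κ) ^ 2)
        ≤ ((k : ℝ) + 1) ^ (-(1 / 4 : ℝ)) := by
      refine (Real.sqrt_le_sqrt (S_le β hβ k)).trans_eq ?_
      rw [Real.sqrt_eq_rpow, ← Real.rpow_mul hx.le]
      norm_num
    have hts0 : (0 : ℝ) ≤ t * ((k : ℝ) + 1) ^ (-(3 / 4 : ℝ)) := by positivity
    calc ts k * Real.sqrt (∑ τ ∈ Finset.range (k + 1),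
          (1 - β τ) ^ 2 * ∏ κ ∈ Finset.Icc (τ + 1) k, (β κ) ^ 2)
        ≤ t * ((k : ℝ) + 1) ^ (-(3 / 4 : ℝ)) * (((k : ℝ) + 1) ^ (-(1 / 4 : ℝ))) := by
          rw [hts k]
          exact mul_le_mul_of_nonneg_left h1 hts0
      _ = t * ((k : ℝ) + 1)⁻¹ := by
          rw [mul_assoc, ← Real.rpow_add hx]
          norm_num
          rw [← Real.rpow_neg_one ((k:ℝ)+1)]
          norm_num
  have hsum : ∑ k ∈ Finset.range K,
      ts k * Real.sqrt (∑ τ ∈ Finset.range (k + 1),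
        (1 - β τ) ^ 2 * ∏ κ ∈ Finset.Icc (τ + 1) k, (β κ) ^ 2)
      ≤ ∑ k ∈ Finset.range K, t * ((k : ℝ) + 1)⁻¹ :=
    Finset.sum_le_sum fun k _ => hterm k
  have hharm : ∑ k ∈ Finset.range K, ((k : ℝ) + 1)⁻¹ = (harmonic K : ℝ) := by
    rw [harmonic]
    push_cast
    rfl
  have hlog : (harmonic K : ℝ) ≤ 1 + Real.log K := harmonic_le_one_add_log K
  have hlogK : 0 ≤ Real.log K := Real.log_nonneg (by exact_mod_cast hK)
  have hs1 : (1 : ℝ) ≤ Real.sqrt (2 * Real.exp 1 ^ 2) :=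
    Real.one_le_sqrt.mpr (by nlinarith [Real.exp_one_gt_d9])
  calc ∑ k ∈ Finset.range K,
        ts k * Real.sqrt (∑ τ ∈ Finset.range (k + 1),
          (1 - β τ) ^ 2 * ∏ κ ∈ Finset.Icc (τ + 1) k, (β κ) ^ 2)
      ≤ ∑ k ∈ Finset.range K, t * ((k : ℝ) + 1)⁻¹ := hsum
    _ = t * (harmonic K : ℝ) := by rw [← Finset.mul_sum, hharm]
    _ ≤ t * (1 + Real.log K) := mul_le_mul_of_nonneg_left hlog ht.le
    _ ≤ t * (7 / 2 + Real.sqrt (2 * Real.exp 1 ^ 2) * Real.log K) := by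
        have := le_mul_of_one_le_left hlogK hs1
        nlinarith
end

section
/- Let t > 0 and for integers k ≥ 0 set β^k = 1 − (k+1)^{−1/2} and t^k = t (k+1)^{−3/4}. Then for every integer K ≥ 1, Σ_{k=0}^{K−1} t^k · Σ_{τ=1}^{k} t^τ ∏_{κ=τ}^{k} β^κ ≤ 7 t² (3 + log K). -/
open Finset

lemma aux_ineq (u : ℝ) (hu : 2 ≤ u) :
    (1 - u ^ (-(1/2 : ℝ))) * (2 * (u-1) ^ (-(1/4 : ℝ)) + u ^ (-(3/4 : ℝ)))
      ≤ 2 * u ^ (-(1/4 : ℝ)) := by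
  have hu0 : (0:ℝ) < u := by linarith
  have hu1 : (0:ℝ) < u - 1 := by linarith
  set s := u ^ (-(1/2 : ℝ)) with hs_def
  have hs0 : 0 < s := Real.rpow_pos_of_pos hu0 _
  have hs1 : s < 1 := Real.rpow_lt_one_of_one_lt_of_neg (by linarith) (by norm_num)
  have hss : s * s * u = 1 := by
    rw [hs_def, ← Real.rpow_add hu0,
      show (-(1/2:ℝ)) + -(1/2) = -1 by norm_num, Real.rpow_neg_one]
    field_simp
  -- step A
  have hA : (u-1) ^ (-(1/4 : ℝ)) ≤ u ^ (-(1/4 : ℝ)) * (u/(u-1)) := by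
    have h1 : (u-1) ^ (-(1/4 : ℝ)) = u ^ (-(1/4 : ℝ)) * ((u-1)/u) ^ (-(1/4 : ℝ)) := by
      rw [← Real.mul_rpow hu0.le (div_nonneg hu1.le hu0.le)]
      congr 1
      field_simp
    have h2 : ((u-1)/u) ^ (-(1/4 : ℝ)) ≤ ((u-1)/u) ^ (-(1 : ℝ)) :=
      Real.rpow_le_rpow_of_exponent_ge (div_pos hu1 hu0)
        (by rw [div_le_one hu0]; linarith) (by norm_num)
    have h3 : ((u-1)/u) ^ (-(1 : ℝ)) = u/(u-1) := by
      rw [Real.rpow_neg_one, inv_div]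
    rw [h1]
    calc u ^ (-(1/4 : ℝ)) * ((u-1)/u) ^ (-(1/4 : ℝ))
        ≤ u ^ (-(1/4 : ℝ)) * ((u-1)/u) ^ (-(1 : ℝ)) := by
          apply mul_le_mul_of_nonneg_left h2 (Real.rpow_nonneg hu0.le _)
      _ = u ^ (-(1/4 : ℝ)) * (u/(u-1)) := by rw [h3]
  have h34 : u ^ (-(3/4 : ℝ)) = u ^ (-(1/4 : ℝ)) * s := by
    rw [hs_def, ← Real.rpow_add hu0]; norm_num
  have hq : 0 ≤ u ^ (-(1/4 : ℝ)) := Real.rpow_nonneg hu0.le _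
  calc (1 - s) * (2 * (u-1) ^ (-(1/4 : ℝ)) + u ^ (-(3/4 : ℝ)))
      ≤ (1 - s) * (2 * (u ^ (-(1/4 : ℝ)) * (u/(u-1))) + u ^ (-(1/4 : ℝ)) * s) := by
        apply mul_le_mul_of_nonneg_left _ (by linarith)
        rw [h34]
        gcongr
    _ = u ^ (-(1/4 : ℝ)) * ((1 - s) * (2 * (u/(u-1)) + s)) := by ring
    _ ≤ u ^ (-(1/4 : ℝ)) * 2 := by
        apply mul_le_mul_of_nonneg_left _ hq
        rw [show (1 - s) * (2 * (u/(u-1)) + s) = ((1-s) * (2*u + s*(u-1)))/(u-1) by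
          field_simp, div_le_iff₀ hu1]
        nlinarith [mul_nonneg (sub_nonneg.2 hs1.le) (by positivity : (0:ℝ) ≤ 1 + s^2),
          hss, hs0.le, mul_pos hs0 hu0]
    _ = 2 * u ^ (-(1/4 : ℝ)) := by ring

lemma harm_le (K : ℕ) (hK : 1 ≤ K) :
    ∑ k ∈ range K, (1:ℝ)/(k+1) ≤ 1 + Real.log K := by
  induction K with
  | zero => omega
  | succ n ih =>
    rcases Nat.eq_or_lt_of_le hK with h1 | h1
    · simp [← h1]
    · have hn : 1 ≤ n := by omega
      have hn0 : (0:ℝ) < n := by positivity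
      have hlog : Real.log n + 1/(n+1) ≤ Real.log (n+1) := by
        have h := Real.log_le_sub_one_of_pos (x := (n:ℝ)/(n+1)) (by positivity)
        rw [Real.log_div (ne_of_gt hn0) (by positivity)] at h
        have : (n:ℝ)/(n+1) - 1 = -(1/(n+1)) := by field_simp; ring
        rw [this] at h
        linarith
      rw [Finset.sum_range_succ]
      have := ih hn
      push_cast
      linarith


/-- Technical Lemma (Hübler et al., part (ii)): with `βᵏ = 1 − (k+1)^{−1/2}` and
`tᵏ = t(k+1)^{−3/4}` for `t > 0`, for every `K ≥ 1`,
`Σ_{k=0}^{K−1} tᵏ Σ_{τ=1}^{k} t^τ ∏_{κ=τ}^{k} β^κ ≤ 7t²(3 + log K)`. -/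
theorem stmt_5 (t : ℝ) (ht : 0 < t)
    (β : ℕ → ℝ) (hβ : ∀ k, β k = 1 - ((k : ℝ) + 1) ^ (-(1 / 2 : ℝ)))
    (ts : ℕ → ℝ) (hts : ∀ k, ts k = t * ((k : ℝ) + 1) ^ (-(3 / 4 : ℝ)))
    (K : ℕ) (hK : 1 ≤ K) :
    ∑ k ∈ Finset.range K,
        ts k * ∑ τ ∈ Finset.Icc 1 k, ts τ * ∏ κ ∈ Finset.Icc τ k, β κ
      ≤ 7 * t ^ 2 * (3 + Real.log K) := by
  set a : ℕ → ℝ := fun k => ∑ τ ∈ Finset.Icc 1 k, ts τ * ∏ κ ∈ Finset.Icc τ k, β κ with ha_def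
  have hts_pos : ∀ k, 0 < ts k := fun k => by
    rw [hts]; exact mul_pos ht (Real.rpow_pos_of_pos (by positivity) _)
  -- recurrence
  have hrec : ∀ k : ℕ, a (k+1) = β (k+1) * (a k + ts (k+1)) := by
    intro k
    have h1 : a (k+1) = (∑ τ ∈ Finset.Icc 1 k, ts τ * ∏ κ ∈ Finset.Icc τ (k+1), β κ)
        + ts (k+1) * ∏ κ ∈ Finset.Icc (k+1) (k+1), β κ := by
      rw [ha_def]
      exact Finset.sum_Icc_succ_top (by omega) _
    rw [h1, Finset.Icc_self, Finset.prod_singleton]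
    have h2 : ∀ τ ∈ Finset.Icc 1 k, ts τ * ∏ κ ∈ Finset.Icc τ (k+1), β κ
        = (ts τ * ∏ κ ∈ Finset.Icc τ k, β κ) * β (k+1) := by
      intro τ hτ
      rw [Finset.mem_Icc] at hτ
      rw [Finset.prod_Icc_succ_top (by omega)]
      ring
    rw [Finset.sum_congr rfl h2, ← Finset.sum_mul]
    ring
  -- induction bound
  have hbd : ∀ k : ℕ, a k ≤ 2 * t * ((k : ℝ) + 1) ^ (-(1/4 : ℝ)) := by
    intro k
    induction k with
    | zero =>
      simp only [ha_def]
      rw [show Finset.Icc 1 0 = (∅ : Finset ℕ) by rfl]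
      simp
      positivity
    | succ n ih =>
      rw [hrec n]
      have hu : (2:ℝ) ≤ (n:ℝ) + 2 := by have := Nat.cast_nonneg (α := ℝ) n; linarith
      have hβpos : 0 ≤ β (n+1) := by
        rw [hβ]
        push_cast
        have : ((n:ℝ) + 1 + 1) ^ (-(1/2 : ℝ)) ≤ 1 :=
          Real.rpow_le_one_of_one_le_of_nonpos (by linarith) (by norm_num)
        linarith
      have step1 : β (n+1) * (a n + ts (n+1))
          ≤ β (n+1) * (2 * t * ((n:ℝ)+1) ^ (-(1/4 : ℝ)) + t * ((n:ℝ)+2) ^ (-(3/4 : ℝ))) := by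
        apply mul_le_mul_of_nonneg_left _ hβpos
        have : ts (n+1) = t * ((n:ℝ)+2) ^ (-(3/4 : ℝ)) := by
          rw [hts]; push_cast; ring_nf
        rw [this]
        linarith [ih]
      have key := aux_ineq ((n:ℝ)+2) hu
      have hβval : β (n+1) = 1 - ((n:ℝ)+2) ^ (-(1/2 : ℝ)) := by
        rw [hβ]; push_cast; ring_nf
      have hsub : ((n:ℝ)+2) - 1 = (n:ℝ)+1 := by ring
      rw [hsub] at key
      calc β (n+1) * (a n + ts (n+1))
          ≤ β (n+1) * (2 * t * ((n:ℝ)+1) ^ (-(1/4 : ℝ)) + t * ((n:ℝ)+2) ^ (-(3/4 : ℝ))) := step1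
        _ = t * ((1 - ((n:ℝ)+2) ^ (-(1/2 : ℝ))) *
              (2 * ((n:ℝ)+1) ^ (-(1/4 : ℝ)) + ((n:ℝ)+2) ^ (-(3/4 : ℝ)))) := by
            rw [hβval]; ring
        _ ≤ t * (2 * ((n:ℝ)+2) ^ (-(1/4 : ℝ))) := by
            exact mul_le_mul_of_nonneg_left key ht.le
        _ = 2 * t * (((n+1 : ℕ) : ℝ) + 1) ^ (-(1/4 : ℝ)) := by push_cast; ring_nf
  -- sum bound
  have hterm : ∀ k ∈ Finset.range K,
      ts k * a k ≤ 2 * t^2 * (1/((k:ℝ)+1)) := by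
    intro k _
    calc ts k * a k ≤ ts k * (2 * t * ((k:ℝ)+1) ^ (-(1/4 : ℝ))) :=
          mul_le_mul_of_nonneg_left (hbd k) (hts_pos k).le
      _ = 2 * t^2 * (((k:ℝ)+1) ^ (-(3/4 : ℝ)) * ((k:ℝ)+1) ^ (-(1/4 : ℝ))) := by
          rw [hts]; ring
      _ = 2 * t^2 * (1/((k:ℝ)+1)) := by
          rw [← Real.rpow_add (by positivity), show (-(3/4:ℝ)) + -(1/4) = -1 by norm_num,
            Real.rpow_neg_one]
          rw [one_div]
  have hsum : ∑ k ∈ Finset.range K, ts k * a k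
      ≤ ∑ k ∈ Finset.range K, 2 * t^2 * (1/((k:ℝ)+1)) := Finset.sum_le_sum hterm
  have hharm := harm_le K hK
  have hlogK : 0 ≤ Real.log K := Real.log_nonneg (by exact_mod_cast hK)
  calc ∑ k ∈ Finset.range K, ts k * a k
      ≤ ∑ k ∈ Finset.range K, 2 * t^2 * (1/((k:ℝ)+1)) := hsum
    _ = 2 * t^2 * ∑ k ∈ Finset.range K, (1:ℝ)/((k:ℝ)+1) := by rw [Finset.mul_sum]
    _ ≤ 2 * t^2 * (1 + Real.log K) := by
        apply mul_le_mul_of_nonneg_left hharm (by positivity)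
    _ ≤ 7 * t ^ 2 * (3 + Real.log K) := by nlinarith [sq_nonneg t, ht]
end

section
/- Let f: S → ℝ be layer-wise (L⁰, L¹)-smooth with L¹_i = 0 for all i = 1,…,p and satisfy the layer-wise Polyak–Łojasiewicz condition with constant μ > 0, with f⋆ = inf_{X∈S} f(X) > −∞, and let ε > 0. Let X⁰, X¹, …, X^K be iterates of deterministic Gluon with stepsizes t_i^k = ‖∇_i f(X^k)‖_{(i)⋆} / L⁰_i. Then with Δ⁰ = f(X⁰) − f⋆ and L⁰_max = max_i L⁰_i, if K = ⌈ (L⁰_max/μ) · log(Δ⁰/ε) ⌉, it holds that f(X^K) − f⋆ ≤ ε. -/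
noncomputable section
open Finset

/-- `Y` minimizes the linear functional `Z ↦ ⟨G, Z⟩` over the ball of radius `t`
centered at `C` (the linear minimization oracle). -/
def IsLMOMin {m n : ℕ} (nn : MatNorm m n) (G C : Fin m → Fin n → ℝ) (t : ℝ)
    (Y : Fin m → Fin n → ℝ) : Prop :=
  nn.N (Y - C) ≤ t ∧ ∀ Z, nn.N (Z - C) ≤ t → tip G Y ≤ tip G Z

namespace Gluon

variable {m n : ℕ}

lemma tip_smul_right (A B : Fin m → Fin n → ℝ) (c : ℝ) : tip A (c • B) = c * tip A B := by
  simp [tip, Finset.mul_sum, mul_comm, mul_left_comm]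

lemma tip_zero_right (A : Fin m → Fin n → ℝ) : tip A 0 = 0 := by simp [tip]

lemma tip_zero_left (A : Fin m → Fin n → ℝ) : tip 0 A = 0 := by simp [tip]

lemma tip_sub_right (A B C : Fin m → Fin n → ℝ) : tip A (B - C) = tip A B - tip A C := by
  simp [tip, mul_sub, Finset.sum_sub_distrib]

lemma tip_sub_left (A B C : Fin m → Fin n → ℝ) : tip (A - B) C = tip A C - tip B C := by
  simp [tip, sub_mul, Finset.sum_sub_distrib]

lemma tip_neg_right (A B : Fin m → Fin n → ℝ) : tip A (-B) = -tip A B := by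
  simp [tip, Finset.sum_neg_distrib]

lemma tip_self_nonneg (A : Fin m → Fin n → ℝ) : 0 ≤ tip A A := by
  apply Finset.sum_nonneg; intro a _; apply Finset.sum_nonneg; intro b _; exact mul_self_nonneg _

lemma tip_self_pos {A : Fin m → Fin n → ℝ} (hA : A ≠ 0) : 0 < tip A A := by
  have : ∃ a b, A a b ≠ 0 := by
    by_contra h; push_neg at h; apply hA; funext a b; exact h a b
  obtain ⟨a, b, hab⟩ := this
  apply Finset.sum_pos'
  · intro x _; apply Finset.sum_nonneg; intro y _; exact mul_self_nonneg _
  · exact ⟨a, Finset.mem_univ a, Finset.sum_pos' (fun y _ => mul_self_nonneg _)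
      ⟨b, Finset.mem_univ b, mul_self_pos.mpr hab⟩⟩


variable (nn : MatNorm m n)

lemma N_neg (A : Fin m → Fin n → ℝ) : nn.N (-A) = nn.N A := by
  have := nn.smul (-1) A
  simpa using this

lemma N_nonneg (A : Fin m → Fin n → ℝ) : 0 ≤ nn.N A := by
  have h1 := nn.triangle A (-A)
  rw [add_neg_cancel, nn.zero, N_neg] at h1
  linarith

lemma eq_zero_of_N_nonpos {A : Fin m → Fin n → ℝ} (h : nn.N A ≤ 0) : A = 0 := by
  by_contra hA
  exact absurd h (not_le.mpr (nn.pos A hA))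

lemma N_sub_comm (A B : Fin m → Fin n → ℝ) : nn.N (A - B) = nn.N (B - A) := by
  rw [← N_neg nn (A - B), neg_sub]

lemma N_sum_le {ι : Type*} (s : Finset ι) (F : ι → Fin m → Fin n → ℝ) :
    nn.N (∑ x ∈ s, F x) ≤ ∑ x ∈ s, nn.N (F x) := by
  classical
  induction s using Finset.induction_on with
  | empty => simp [nn.zero]
  | insert _ _ hx ih =>
    rw [Finset.sum_insert hx, Finset.sum_insert hx]
    exact (nn.triangle _ _).trans (by linarith)

lemma exists_upper : ∃ C : ℝ, 0 ≤ C ∧ ∀ Z, nn.N Z ≤ C * ‖Z‖ := by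
  classical
  set e : Fin m → Fin n → Fin m → Fin n → ℝ :=
    fun a b => Pi.single a (Pi.single b (1:ℝ)) with he
  refine ⟨∑ a, ∑ b, nn.N (e a b), Finset.sum_nonneg fun a _ =>
    Finset.sum_nonneg fun b _ => N_nonneg nn _, fun Z => ?_⟩
  have hdec : Z = ∑ a, ∑ b, Z a b • e a b := by
    funext a' b'
    simp only [Finset.sum_apply, Pi.smul_apply, he, smul_eq_mul]
    rw [Finset.sum_eq_single a']
    · rw [Finset.sum_eq_single b']
      · simp
      · intro b _ hb; simp [Pi.single_apply, hb.symm]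
      · intro h; exact absurd (Finset.mem_univ b') h
    · intro a _ ha; simp [Pi.single_apply, ha.symm]
    · intro h; exact absurd (Finset.mem_univ a') h
  calc nn.N Z = nn.N (∑ a, ∑ b, Z a b • e a b) := by rw [← hdec]
    _ ≤ ∑ a, nn.N (∑ b, Z a b • e a b) := N_sum_le nn _ _
    _ ≤ ∑ a, ∑ b, nn.N (Z a b • e a b) := Finset.sum_le_sum fun a _ => N_sum_le nn _ _
    _ ≤ ∑ a, ∑ b, nn.N (e a b) * ‖Z‖ := by
        refine Finset.sum_le_sum fun a _ => Finset.sum_le_sum fun b _ => ?_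
        rw [nn.smul]
        have h1 : |Z a b| ≤ ‖Z‖ := by
          calc |Z a b| = ‖Z a b‖ := (Real.norm_eq_abs _).symm
            _ ≤ ‖Z a‖ := norm_le_pi_norm (Z a) b
            _ ≤ ‖Z‖ := norm_le_pi_norm Z a
        exact mul_le_mul_of_nonneg_right h1 (N_nonneg nn _) |>.trans_eq (mul_comm _ _) |>.trans
          (mul_le_mul_of_nonneg_left le_rfl (N_nonneg nn _))
    _ = (∑ a, ∑ b, nn.N (e a b)) * ‖Z‖ := by rw [Finset.sum_mul]; congr 1; funext; rw [Finset.sum_mul]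

lemma continuous_N : Continuous nn.N := by
  obtain ⟨C, hC0, hC⟩ := exists_upper nn
  have key : ∀ X Y, nn.N X - nn.N Y ≤ C * dist X Y := by
    intro X Y
    have h1 : nn.N X ≤ nn.N (X - Y) + nn.N Y := by
      have := nn.triangle (X - Y) Y
      rwa [sub_add_cancel] at this
    have h2 := hC (X - Y)
    rw [dist_eq_norm]
    linarith
  have : LipschitzWith (Real.toNNReal C) nn.N := by
    apply LipschitzWith.of_dist_le_mul
    intro X Y
    rw [Real.dist_eq, abs_sub_le_iff]
    constructor
    · exact (key X Y).trans (by rw [Real.coe_toNNReal C hC0])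
    · exact (key Y X).trans (by rw [Real.coe_toNNReal C hC0, dist_comm])
  exact this.continuous

lemma exists_lower : ∃ c : ℝ, 0 < c ∧ ∀ Z, c * ‖Z‖ ≤ nn.N Z := by
  rcases subsingleton_or_nontrivial (Fin m → Fin n → ℝ) with hs | hs
  · refine ⟨1, one_pos, fun Z => ?_⟩
    have : Z = 0 := Subsingleton.elim Z 0
    simp [this, nn.zero]
  · obtain ⟨z, hz, hmin⟩ := (isCompact_sphere (0 : Fin m → Fin n → ℝ) 1).exists_isMinOn
      (NormedSpace.sphere_nonempty.mpr zero_le_one) (continuous_N nn).continuousOn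
    have hz1 : ‖z‖ = 1 := mem_sphere_zero_iff_norm.mp hz
    have hzne : z ≠ 0 := by intro h; rw [h, norm_zero] at hz1; norm_num at hz1
    refine ⟨nn.N z, nn.pos z hzne, fun Z => ?_⟩
    rcases eq_or_ne Z 0 with rfl | hZ
    · simp [nn.zero]
    · have hnZ : (0:ℝ) < ‖Z‖ := norm_pos_iff.mpr hZ
      have hw : (‖Z‖⁻¹ • Z) ∈ Metric.sphere (0 : Fin m → Fin n → ℝ) 1 := by
        rw [mem_sphere_zero_iff_norm, norm_smul, norm_inv, norm_norm, inv_mul_cancel₀ hnZ.ne']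
      have : nn.N z ≤ nn.N (‖Z‖⁻¹ • Z) := hmin hw
      rw [nn.smul, abs_inv, abs_norm] at this
      have h2 : nn.N z * ‖Z‖ ≤ ‖Z‖⁻¹ * nn.N Z * ‖Z‖ :=
        mul_le_mul_of_nonneg_right this hnZ.le
      calc nn.N z * ‖Z‖ ≤ ‖Z‖⁻¹ * nn.N Z * ‖Z‖ := h2
        _ = nn.N Z := by field_simp


lemma zero_mem_dualSet (A : Fin m → Fin n → ℝ) :
    (0:ℝ) ∈ {r : ℝ | ∃ Z, nn.N Z ≤ 1 ∧ r = tip A Z} :=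
  ⟨0, by rw [nn.zero]; exact zero_le_one, (tip_zero_right A).symm⟩

lemma dual_bddAbove (A : Fin m → Fin n → ℝ) :
    BddAbove {r : ℝ | ∃ Z, nn.N Z ≤ 1 ∧ r = tip A Z} := by
  obtain ⟨c, hc, hcl⟩ := exists_lower nn
  refine ⟨(∑ a, ∑ b, |A a b|) * c⁻¹, ?_⟩
  rintro r ⟨Z, hZ, rfl⟩
  have h1 : c * ‖Z‖ ≤ 1 := (hcl Z).trans hZ
  have hnZ : ‖Z‖ ≤ c⁻¹ := by
    rw [← one_div]
    rw [le_div_iff₀ hc, mul_comm]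
    exact h1
  have hterm : ∀ a b, A a b * Z a b ≤ |A a b| * c⁻¹ := by
    intro a b
    calc A a b * Z a b ≤ |A a b * Z a b| := le_abs_self _
      _ = |A a b| * |Z a b| := abs_mul _ _
      _ ≤ |A a b| * c⁻¹ := by
          refine mul_le_mul_of_nonneg_left ?_ (abs_nonneg _)
          calc |Z a b| = ‖Z a b‖ := (Real.norm_eq_abs _).symm
            _ ≤ ‖Z a‖ := norm_le_pi_norm (Z a) b
            _ ≤ ‖Z‖ := norm_le_pi_norm Z a
            _ ≤ c⁻¹ := hnZ
  calc tip A Z ≤ ∑ a, ∑ b, |A a b| * c⁻¹ :=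
        Finset.sum_le_sum fun a _ => Finset.sum_le_sum fun b _ => hterm a b
    _ = (∑ a, ∑ b, |A a b|) * c⁻¹ := by
        rw [Finset.sum_mul]; congr 1; funext; rw [Finset.sum_mul]

lemma dual_nonneg (A : Fin m → Fin n → ℝ) : 0 ≤ nn.dual A :=
  le_csSup (dual_bddAbove nn A) (zero_mem_dualSet nn A)

lemma le_dual {A Z : Fin m → Fin n → ℝ} (h : nn.N Z ≤ 1) : tip A Z ≤ nn.dual A :=
  le_csSup (dual_bddAbove nn A) ⟨Z, h, rfl⟩

lemma dual_le {A : Fin m → Fin n → ℝ} {B : ℝ}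
    (h : ∀ Z, nn.N Z ≤ 1 → tip A Z ≤ B) : nn.dual A ≤ B := by
  apply csSup_le ⟨0, zero_mem_dualSet nn A⟩
  rintro r ⟨Z, hZ, rfl⟩
  exact h Z hZ

lemma tip_le_dual_mul (A Z : Fin m → Fin n → ℝ) : tip A Z ≤ nn.dual A * nn.N Z := by
  rcases eq_or_ne Z 0 with rfl | hZ
  · rw [tip_zero_right, nn.zero, mul_zero]
  · have hNZ : 0 < nn.N Z := nn.pos Z hZ
    have hw : nn.N ((nn.N Z)⁻¹ • Z) ≤ 1 := by
      rw [nn.smul, abs_inv, abs_of_pos hNZ, inv_mul_cancel₀ hNZ.ne']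
    have h1 : tip A ((nn.N Z)⁻¹ • Z) ≤ nn.dual A := le_dual nn hw
    rw [tip_smul_right] at h1
    have h2 := mul_le_mul_of_nonneg_right h1 hNZ.le
    calc tip A Z = (nn.N Z)⁻¹ * tip A Z * nn.N Z := by field_simp
      _ ≤ nn.dual A * nn.N Z := h2

lemma dual_pos {A : Fin m → Fin n → ℝ} (hA : A ≠ 0) : 0 < nn.dual A := by
  have hNA : 0 < nn.N A := nn.pos A hA
  have hw : nn.N ((nn.N A)⁻¹ • A) ≤ 1 := by
    rw [nn.smul, abs_inv, abs_of_pos hNA, inv_mul_cancel₀ hNA.ne']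
  have h1 : tip A ((nn.N A)⁻¹ • A) ≤ nn.dual A := le_dual nn hw
  rw [tip_smul_right] at h1
  have h2 : 0 < (nn.N A)⁻¹ * tip A A := mul_pos (inv_pos.mpr hNA) (tip_self_pos hA)
  linarith

lemma eq_zero_of_dual_nonpos {A : Fin m → Fin n → ℝ} (h : nn.dual A ≤ 0) : A = 0 := by
  by_contra hA
  exact absurd h (not_le.mpr (dual_pos nn hA))

lemma dual_zero : nn.dual (0 : Fin m → Fin n → ℝ) = 0 :=
  le_antisymm (dual_le nn fun Z _ => (tip_zero_left Z).le) (dual_nonneg nn 0)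

lemma lmo_bound {G C t Y : _} {nn : MatNorm m n} (ht : 0 ≤ t)
    (h : nn.N (Y - C) ≤ t ∧ ∀ Z, nn.N (Z - C) ≤ t → tip G Y ≤ tip G Z) :
    tip G (Y - C) ≤ -(t * nn.dual G) := by
  rcases ht.lt_or_eq with ht' | ht'
  · have hdle : nn.dual G ≤ (tip G C - tip G Y) / t := by
      apply dual_le
      intro Z hZ
      have hmem : nn.N ((C - t • Z) - C) ≤ t := by
        have : (C - t • Z) - C = -(t • Z) := by abel
        rw [this, N_neg, nn.smul, abs_of_pos ht']
        calc t * nn.N Z ≤ t * 1 := mul_le_mul_of_nonneg_left hZ ht'.le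
          _ = t := mul_one t
      have h2 := h.2 _ hmem
      rw [tip_sub_right, tip_smul_right] at h2
      rw [le_div_iff₀ ht']
      linarith
    have h3 := mul_le_mul_of_nonneg_left hdle ht'.le
    rw [mul_div_cancel₀ _ ht'.ne'] at h3
    rw [tip_sub_right]
    linarith
  · have hY : Y - C = 0 := eq_zero_of_N_nonpos nn (ht' ▸ h.1)
    rw [hY, tip_zero_right, ← ht']
    simp

lemma descent {p : ℕ} {m n : Fin p → ℕ} (nn : ∀ i, MatNorm (m i) (n i))
    (f : (∀ i, Fin (m i) → Fin (n i) → ℝ) → ℝ)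
    (g : (∀ i, Fin (m i) → Fin (n i) → ℝ) → ∀ i, Fin (m i) → Fin (n i) → ℝ)
    (hdiff : ContDiff ℝ 1 f)
    (hgrad : ∀ X H, fderiv ℝ f X H = ∑ i, tip (g X i) (H i))
    (L0 : Fin p → ℝ) (hL0 : ∀ i, 0 ≤ L0 i)
    (hsm : ∀ i X Y, (nn i).dual (g X i - g Y i) ≤ L0 i * (nn i).N (X i - Y i))
    (X d : ∀ i, Fin (m i) → Fin (n i) → ℝ) :
    f (X + d) ≤ f X + ∑ i, tip (g X i) (d i) + (∑ i, L0 i * ((nn i).N (d i))^2) / 2 := by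
  set A := ∑ i, tip (g X i) (d i) with hA
  set B := ∑ i, L0 i * ((nn i).N (d i))^2 with hB
  have hBnn : 0 ≤ B := Finset.sum_nonneg fun i _ =>
    mul_nonneg (hL0 i) (sq_nonneg _)
  set ψ : ℝ → ℝ := fun s => f (X + s • d) - s * A - s^2 * (B/2) with hψdef
  have hγ : ∀ s : ℝ, HasDerivAt (fun s : ℝ => X + s • d) d s := by
    intro s
    have h1 : HasDerivAt (fun s : ℝ => s • d) ((1:ℝ) • d) s :=
      (hasDerivAt_id s).smul_const d
    simpa using h1.const_add X
  have hψ : ∀ s : ℝ, HasDerivAt ψ (fderiv ℝ f (X + s • d) d - A - s * B) s := by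
    intro s
    have h1 : HasDerivAt (fun s : ℝ => f (X + s • d)) (fderiv ℝ f (X + s • d) d) s :=
      (hdiff.differentiable one_ne_zero (X + s • d)).hasFDerivAt.comp_hasDerivAt s (hγ s)
    have h2 : HasDerivAt (fun s : ℝ => s * A) A s := by
      simpa using (hasDerivAt_id s).mul_const A
    have h3 : HasDerivAt (fun s : ℝ => s^2 * (B/2)) (s * B) s := by
      have := (hasDerivAt_pow 2 s).mul_const (B/2)
      refine this.congr_deriv ?_
      push_cast
      ring
    exact (h1.sub h2).sub h3
  have hdiffψ : Differentiable ℝ ψ := fun s => (hψ s).differentiableAt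
  have hkey : ∀ s ∈ interior (Set.Icc (0:ℝ) 1), deriv ψ s ≤ 0 := by
    intro s hs
    rw [interior_Icc, Set.mem_Ioo] at hs
    rw [(hψ s).deriv]
    have hfd : fderiv ℝ f (X + s • d) d = ∑ i, tip (g (X + s • d) i) (d i) := hgrad _ _
    have hbd : ∀ i : Fin p, tip (g (X + s • d) i) (d i) - tip (g X i) (d i)
        ≤ s * (L0 i * ((nn i).N (d i))^2) := by
      intro i
      have h1 : tip (g (X + s • d) i - g X i) (d i)
          ≤ (nn i).dual (g (X + s • d) i - g X i) * (nn i).N (d i) :=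
        tip_le_dual_mul (nn i) _ _
      have h2 : (nn i).dual (g (X + s • d) i - g X i)
          ≤ L0 i * (nn i).N ((X + s • d) i - X i) := hsm i _ _
      have h3 : (X + s • d) i - X i = s • d i := by
        simp [Pi.add_apply, Pi.smul_apply]
      rw [h3, (nn i).smul, abs_of_pos hs.1] at h2
      have h4 := h1.trans (mul_le_mul_of_nonneg_right h2 (N_nonneg (nn i) _))
      rw [tip_sub_left] at h4
      calc tip (g (X + s • d) i) (d i) - tip (g X i) (d i)
          ≤ L0 i * (s * (nn i).N (d i)) * (nn i).N (d i) := h4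
        _ = s * (L0 i * ((nn i).N (d i))^2) := by ring
    have h5 : (∑ i, tip (g (X + s • d) i) (d i)) - A ≤ s * B := by
      rw [hA, ← Finset.sum_sub_distrib, hB, Finset.mul_sum]
      exact Finset.sum_le_sum fun i _ => hbd i
    rw [hfd]
    linarith
  have hanti := antitoneOn_of_deriv_nonpos (convex_Icc (0:ℝ) 1)
    hdiffψ.continuous.continuousOn (hdiffψ.differentiableOn) hkey
  have h01 := hanti (Set.left_mem_Icc.mpr zero_le_one) (Set.right_mem_Icc.mpr zero_le_one)
    zero_le_one
  have hψ0 : ψ 0 = f X := by simp [hψdef]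
  have hψ1 : ψ 1 = f (X + d) - A - B/2 := by simp [hψdef]
  rw [hψ0, hψ1] at h01
  linarith

lemma gzero {p : ℕ} {m n : Fin p → ℕ} (nn : ∀ i, MatNorm (m i) (n i))
    (f : (∀ i, Fin (m i) → Fin (n i) → ℝ) → ℝ)
    (g : (∀ i, Fin (m i) → Fin (n i) → ℝ) → ∀ i, Fin (m i) → Fin (n i) → ℝ)
    (hdiff : ContDiff ℝ 1 f)
    (hgrad : ∀ X H, fderiv ℝ f X H = ∑ i, tip (g X i) (H i))
    (fstar : ℝ) (hfs : ∀ Y, fstar ≤ f Y)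
    (i : Fin p)
    (hconst : ∀ Y Z, g Y i = g Z i) :
    ∀ Y, g Y i = 0 := by
  intro Y
  by_contra hG
  set G := g Y i with hGdef
  have hc : 0 < tip G G := tip_self_pos hG
  classical
  set H : ∀ j, Fin (m j) → Fin (n j) → ℝ := Pi.single i (-G) with hHdef
  have hγ : ∀ s : ℝ, HasDerivAt (fun s : ℝ => Y + s • H) H s := by
    intro s
    have h1 : HasDerivAt (fun s : ℝ => s • H) ((1:ℝ) • H) s :=
      (hasDerivAt_id s).smul_const H
    simpa using h1.const_add Y
  set h : ℝ → ℝ := fun s => f (Y + s • H) + s * tip G G with hhdef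
  have hder : ∀ s : ℝ, HasDerivAt h 0 s := by
    intro s
    have h1 : HasDerivAt (fun s : ℝ => f (Y + s • H)) (fderiv ℝ f (Y + s • H) H) s :=
      (hdiff.differentiable one_ne_zero _).hasFDerivAt.comp_hasDerivAt s (hγ s)
    have h2 : fderiv ℝ f (Y + s • H) H = -(tip G G) := by
      rw [hgrad]
      rw [Finset.sum_eq_single i]
      · rw [hHdef, Pi.single_eq_same, hconst _ Y, ← hGdef, tip_neg_right]
      · intro j _ hj
        rw [hHdef, Pi.single_eq_of_ne hj, tip_zero_right]
      · intro hni; exact absurd (Finset.mem_univ i) hni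
    have h3 : HasDerivAt (fun s : ℝ => s * tip G G) (tip G G) s := by
      simpa using (hasDerivAt_id s).mul_const (tip G G)
    have := (h2 ▸ h1).add h3
    rw [neg_add_cancel] at this; exact this
  have hcst : ∀ s : ℝ, h s = h 0 :=
    fun s => is_const_of_deriv_eq_zero (fun t => (hder t).differentiableAt)
      (fun t => (hder t).deriv) s 0
  set s₀ : ℝ := (f Y - fstar + 1) / tip G G with hs0
  have h0 : h 0 = f Y := by simp [hhdef]
  have hval : f (Y + s₀ • H) = f Y - (f Y - fstar + 1) := by
    have := hcst s₀
    rw [h0, hhdef] at this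
    simp only at this
    have hmul : s₀ * tip G G = f Y - fstar + 1 := div_mul_cancel₀ _ hc.ne'
    linarith
  have := hfs (Y + s₀ • H)
  linarith

end Gluon

open Gluon

/-- Deterministic Gluon under layer-wise `(L⁰,L¹)`-smoothness with `L¹ᵢ = 0` for all `i`,
under the layer-wise Polyak–Łojasiewicz condition with constant `μ > 0`, with stepsizes
`tᵢᵏ = ‖∇ᵢf(Xᵏ)‖⋆/L⁰ᵢ`: after `K = ⌈(L⁰ₘₐₓ/μ) log(Δ⁰/ε)⌉` iterations,
`f(X^K) − f⋆ ≤ ε`. -/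
theorem stmt_9 {p : ℕ} (hp : 0 < p) {m n : Fin p → ℕ}
    (nn : ∀ i, MatNorm (m i) (n i))
    (f : (∀ i, Fin (m i) → Fin (n i) → ℝ) → ℝ)
    (g : (∀ i, Fin (m i) → Fin (n i) → ℝ) → ∀ i, Fin (m i) → Fin (n i) → ℝ)
    (hdiff : ContDiff ℝ 1 f)
    (hgrad : ∀ X H, fderiv ℝ f X H = ∑ i, tip (g X i) (H i))
    (L0 L1 : Fin p → ℝ) (hL0 : ∀ i, 0 ≤ L0 i) (hL1 : ∀ i, L1 i = 0)
    (hsmooth : ∀ i X Y, (nn i).dual (g X i - g Y i)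
      ≤ (L0 i + L1 i * (nn i).dual (g X i)) * (nn i).N (X i - Y i))
    (fstar : ℝ) (hfstar : IsGLB (Set.range f) fstar)
    (μ : ℝ) (hμ : 0 < μ)
    (hPL : ∀ X, 2 * μ * (f X - fstar) ≤ ∑ i, ((nn i).dual (g X i)) ^ 2)
    (ε : ℝ) (hε : 0 < ε)
    (X : ℕ → ∀ i, Fin (m i) → Fin (n i) → ℝ)
    (hupd : ∀ k i, IsLMOMin (nn i) (g (X k) i) (X k i)
      ((nn i).dual (g (X k) i) / L0 i) (X (k + 1) i))
    (K : ℕ)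
    (hK : K = ⌈(⨆ i, L0 i) / μ * Real.log ((f (X 0) - fstar) / ε)⌉₊) :
    f (X K) - fstar ≤ ε := by
  have hfs : ∀ Y, fstar ≤ f Y := fun Y => hfstar.1 ⟨Y, rfl⟩
  have hsm : ∀ i (Y Z : ∀ i, Fin (m i) → Fin (n i) → ℝ),
      (nn i).dual (g Y i - g Z i) ≤ L0 i * (nn i).N (Y i - Z i) := by
    intro i Y Z
    have := hsmooth i Y Z
    rwa [hL1 i, zero_mul, add_zero] at this
  -- layers with L0 i = 0 have identically-zero gradient block
  have hg0 : ∀ i, L0 i = 0 → ∀ Y, g Y i = 0 := by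
    intro i hi
    apply gzero nn f g hdiff hgrad fstar hfs i
    intro Y Z
    have h1 := hsm i Y Z
    rw [hi, zero_mul] at h1
    exact sub_eq_zero.mp (eq_zero_of_dual_nonpos (nn i) h1)
  set Lmax : ℝ := ⨆ i, L0 i with hLmax
  have hbdd : BddAbove (Set.range L0) := (Set.finite_range L0).bddAbove
  have hLle : ∀ i, L0 i ≤ Lmax := fun i => le_ciSup hbdd i
  have i0 : Fin p := ⟨0, hp⟩
  have hLmax0 : 0 ≤ Lmax := (hL0 i0).trans (hLle i0)
  rcases hLmax0.lt_or_eq with hLpos | hLzero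
  swap
  · -- Lmax = 0 : all gradients vanish, PL forces f = fstar everywhere
    have hall : ∀ i, L0 i = 0 := fun i => le_antisymm (hLzero ▸ hLle i) (hL0 i)
    have := hPL (X K)
    have hz : ∀ i : Fin p, ((nn i).dual (g (X K) i)) ^ 2 = 0 := by
      intro i
      rw [hg0 i (hall i) (X K), dual_zero]
      norm_num
    rw [Finset.sum_congr rfl (fun i _ => hz i), Finset.sum_const, smul_zero] at this
    nlinarith
  -- Lmax > 0 case
  have hstep : ∀ k, f (X (k+1)) - fstar ≤ (1 - μ / Lmax) * (f (X k) - fstar) := by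
    intro k
    set d : ∀ i, Fin (m i) → Fin (n i) → ℝ := fun i => X (k+1) i - X k i with hd
    have hXd : X (k+1) = X k + d := by
      funext i
      show X (k+1) i = X k i + (X (k+1) i - X k i)
      abel
    have hdesc := descent nn f g hdiff hgrad L0 hL0 hsm (X k) d
    rw [← hXd] at hdesc
    set D : Fin p → ℝ := fun i => (nn i).dual (g (X k) i) with hD
    have hterm : ∀ i : Fin p,
        tip (g (X k) i) (d i) + L0 i * ((nn i).N (d i))^2 / 2 ≤ -(D i ^ 2 / (2 * Lmax)) := by
      intro i
      by_cases hi : L0 i = 0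
      · have hgz : g (X k) i = 0 := hg0 i hi (X k)
        rw [hD]
        simp [hgz, tip_zero_left, dual_zero, hi]
      · have hLi : 0 < L0 i := (hL0 i).lt_of_ne (Ne.symm hi)
        set t : ℝ := D i / L0 i with ht
        have hDnn : 0 ≤ D i := dual_nonneg (nn i) _
        have htnn : 0 ≤ t := div_nonneg hDnn hLi.le
        have hupdk := hupd k i
        have hNd : (nn i).N (d i) ≤ t := hupdk.1
        have htip : tip (g (X k) i) (d i) ≤ -(t * D i) :=
          lmo_bound htnn ⟨hupdk.1, hupdk.2⟩
        have hsq : ((nn i).N (d i))^2 ≤ t^2 :=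
          pow_le_pow_left₀ (N_nonneg (nn i) _) hNd 2
        have h1 : tip (g (X k) i) (d i) + L0 i * ((nn i).N (d i))^2 / 2
            ≤ -(t * D i) + L0 i * t^2 / 2 := by
          have := mul_le_mul_of_nonneg_left hsq hLi.le
          linarith
        have h2 : -(t * D i) + L0 i * t^2 / 2 = -(D i ^ 2 / (2 * L0 i)) := by
          rw [ht]; field_simp; ring
        have h3 : D i ^ 2 / (2 * Lmax) ≤ D i ^ 2 / (2 * L0 i) := by
          apply div_le_div_of_nonneg_left (sq_nonneg _) (by linarith)
          linarith [hLle i]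
        linarith
    have hsum : ∑ i, (tip (g (X k) i) (d i) + L0 i * ((nn i).N (d i))^2 / 2)
        ≤ ∑ i, -(D i ^ 2 / (2 * Lmax)) := Finset.sum_le_sum fun i _ => hterm i
    have hPLk := hPL (X k)
    have hfsk := hfs (X k)
    have hsum2 : ∑ i : Fin p, -(D i ^ 2 / (2 * Lmax)) = -((∑ i, D i ^ 2) / (2 * Lmax)) := by
      rw [Finset.sum_neg_distrib, ← Finset.sum_div]
    have hPLdiv : (2 * μ * (f (X k) - fstar)) / (2 * Lmax) ≤ (∑ i, D i ^ 2) / (2 * Lmax) :=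
      div_le_div_of_nonneg_right hPLk (by linarith) |>.trans_eq rfl
    have hsimp : (2 * μ * (f (X k) - fstar)) / (2 * Lmax) = μ / Lmax * (f (X k) - fstar) := by
      field_simp
    have hdesc2 : f (X (k+1)) ≤ f (X k) + ∑ i, (tip (g (X k) i) (d i) + L0 i * ((nn i).N (d i))^2 / 2) := by
      have : ∑ i, (tip (g (X k) i) (d i) + L0 i * ((nn i).N (d i))^2 / 2)
          = (∑ i, tip (g (X k) i) (d i)) + (∑ i, L0 i * ((nn i).N (d i))^2) / 2 := by
        rw [Finset.sum_add_distrib, Finset.sum_div]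
      rw [this]
      linarith [hdesc]
    have := hdesc2.trans (by linarith [hsum.trans_eq hsum2] :
      f (X k) + ∑ i, (tip (g (X k) i) (d i) + L0 i * ((nn i).N (d i))^2 / 2)
        ≤ f (X k) - (∑ i, D i ^ 2) / (2 * Lmax))
    have final : f (X (k+1)) ≤ f (X k) - μ / Lmax * (f (X k) - fstar) := by
      have h6 : μ / Lmax * (f (X k) - fstar) ≤ (∑ i, D i ^ 2) / (2 * Lmax) := by
        rw [← hsimp]; exact hPLdiv
      linarith
    linarith [final]
  -- geometric decay via exp
  have hub : ∀ k : ℕ, f (X k) - fstar ≤ Real.exp (-(μ / Lmax) * k) * (f (X 0) - fstar) := by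
    intro k
    induction k with
    | zero => simp
    | succ k ih =>
      have hq : (1 - μ / Lmax) ≤ Real.exp (-(μ / Lmax)) := by
        have := Real.add_one_le_exp (-(μ / Lmax))
        linarith
      have hΔ : 0 ≤ f (X k) - fstar := by linarith [hfs (X k)]
      calc f (X (k+1)) - fstar ≤ (1 - μ / Lmax) * (f (X k) - fstar) := hstep k
        _ ≤ Real.exp (-(μ / Lmax)) * (f (X k) - fstar) :=
            mul_le_mul_of_nonneg_right hq hΔ
        _ ≤ Real.exp (-(μ / Lmax)) * (Real.exp (-(μ / Lmax) * k) * (f (X 0) - fstar)) :=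
            mul_le_mul_of_nonneg_left ih (Real.exp_nonneg _)
        _ = Real.exp (-(μ / Lmax) * ((k:ℝ)+1)) * (f (X 0) - fstar) := by
            rw [← mul_assoc, ← Real.exp_add]
            ring_nf
        _ = Real.exp (-(μ / Lmax) * ((k+1 : ℕ) : ℝ)) * (f (X 0) - fstar) := by
            push_cast
            ring_nf
  have hΔ0 : 0 ≤ f (X 0) - fstar := by linarith [hfs (X 0)]
  by_cases hcase : f (X 0) - fstar ≤ ε
  · have h1 := hub K
    have h2 : Real.exp (-(μ / Lmax) * K) ≤ 1 := by
      rw [Real.exp_le_one_iff]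
      have : 0 ≤ (μ / Lmax) * K := mul_nonneg (div_nonneg hμ.le hLpos.le) (Nat.cast_nonneg K)
      linarith
    calc f (X K) - fstar ≤ Real.exp (-(μ / Lmax) * K) * (f (X 0) - fstar) := h1
      _ ≤ 1 * (f (X 0) - fstar) := mul_le_mul_of_nonneg_right h2 hΔ0
      _ ≤ ε := by linarith
  · push_neg at hcase
    set Δ0 := f (X 0) - fstar with hΔ0def
    have hΔpos : 0 < Δ0 := hε.trans hcase
    have hlogpos : 0 < Real.log (Δ0 / ε) := Real.log_pos (by rw [lt_div_iff₀ hε]; linarith)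
    have hKge : Lmax / μ * Real.log (Δ0 / ε) ≤ (K : ℝ) := by
      rw [hK]
      exact Nat.le_ceil _
    have hexp : Real.exp (-(μ / Lmax) * K) ≤ ε / Δ0 := by
      have h1 : Real.log (Δ0 / ε) ≤ μ / Lmax * K := by
        have h2 := mul_le_mul_of_nonneg_left hKge (le_of_lt (div_pos hμ hLpos))
        have h3 : μ / Lmax * (Lmax / μ * Real.log (Δ0 / ε)) = Real.log (Δ0 / ε) := by
          field_simp
        linarith [h3 ▸ h2]
      have h4 : -(μ / Lmax) * K ≤ -Real.log (Δ0 / ε) := by linarith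
      calc Real.exp (-(μ / Lmax) * K) ≤ Real.exp (-Real.log (Δ0 / ε)) :=
            Real.exp_le_exp.mpr h4
        _ = (Δ0 / ε)⁻¹ := by rw [Real.exp_neg, Real.exp_log (by positivity)]
        _ = ε / Δ0 := by rw [inv_div]
    calc f (X K) - fstar ≤ Real.exp (-(μ / Lmax) * K) * Δ0 := hub K
      _ ≤ (ε / Δ0) * Δ0 := mul_le_mul_of_nonneg_right hexp hΔ0
      _ = ε := div_mul_cancel₀ ε hΔpos.ne'
end
end

section
/- Let f: S → ℝ be layer-wise (L⁰, L¹)-smooth with f^inf = inf_{X∈S} f(X) > −∞. Let X⁰, X¹, …, X^K be iterates of deterministic Gluon with stepsizes t_i^k = ‖∇_i f(X^k)‖_{(i)⋆} / (L⁰_i + L¹_i ‖∇_i f(X^k)‖_{(i)⋆}). Then Σ_{k=0}^{K−1} Σ_{i=1}^p ‖∇_i f(X^k)‖_{(i)⋆}² / (2 (L⁰_i + L¹_i ‖∇_i f(X^k)‖_{(i)⋆})) ≤ f(X⁰) − f^inf. -/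
noncomputable section
open Finset

section Aux
variable {m n : ℕ}

lemma tip_add_right (A B C : Fin m → Fin n → ℝ) : tip A (B + C) = tip A B + tip A C := by
  simp [tip, mul_add, Finset.sum_add_distrib]

lemma tip_smul_right (A : Fin m → Fin n → ℝ) (c : ℝ) (B : Fin m → Fin n → ℝ) :
    tip A (c • B) = c * tip A B := by
  simp [tip, Finset.mul_sum, mul_left_comm]

lemma tip_zero_right (A : Fin m → Fin n → ℝ) : tip A 0 = 0 := by simp [tip]

lemma tip_sub_right (A B C : Fin m → Fin n → ℝ) : tip A (B - C) = tip A B - tip A C := by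
  simp [tip, mul_sub, Finset.sum_sub_distrib]

variable (nn : MatNorm m n)

lemma MatNorm.N_neg (A : Fin m → Fin n → ℝ) : nn.N (-A) = nn.N A := by
  have h := nn.smul (-1) A
  simpa using h

lemma MatNorm.nonneg_s11 (A : Fin m → Fin n → ℝ) : 0 ≤ nn.N A := by
  rcases eq_or_ne A 0 with h | h
  · simp [h, nn.zero]
  · exact (nn.pos A h).le

lemma MatNorm.eq_zero_of_N_le_zero {A : Fin m → Fin n → ℝ} (h : nn.N A ≤ 0) : A = 0 := by
  by_contra hA
  exact absurd h (not_le.mpr (nn.pos A hA))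

/-- Type synonym carrying the `MatNorm` as a normed group structure. -/
def WithNorm (_nn : MatNorm m n) : Type := Fin m → Fin n → ℝ

instance : AddCommGroup (WithNorm nn) := inferInstanceAs (AddCommGroup (Fin m → Fin n → ℝ))
instance : Module ℝ (WithNorm nn) := inferInstanceAs (Module ℝ (Fin m → Fin n → ℝ))

noncomputable instance : NormedAddCommGroup (WithNorm nn) :=
  AddGroupNorm.toNormedAddCommGroup
    { toFun := nn.N
      map_zero' := nn.zero
      add_le' := nn.triangle
      neg' := nn.N_neg
      eq_zero_of_map_eq_zero' := fun A h => nn.eq_zero_of_N_le_zero h.le }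

lemma WithNorm.norm_def (A : WithNorm nn) : ‖A‖ = nn.N A := rfl

noncomputable instance : NormedSpace ℝ (WithNorm nn) :=
  ⟨fun c A => le_of_eq (nn.smul c A)⟩

instance : FiniteDimensional ℝ (WithNorm nn) :=
  inferInstanceAs (FiniteDimensional ℝ (Fin m → Fin n → ℝ))

/-- `tip A ·` as a linear map on `WithNorm nn`. -/
def tipL (A : Fin m → Fin n → ℝ) : WithNorm nn →ₗ[ℝ] ℝ where
  toFun Z := tip A Z
  map_add' B C := tip_add_right A B C
  map_smul' c B := tip_smul_right A c B

lemma tip_bound (A : Fin m → Fin n → ℝ) :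
    ∃ C : ℝ, ∀ Z : Fin m → Fin n → ℝ, tip A Z ≤ C * nn.N Z := by
  refine ⟨‖LinearMap.toContinuousLinearMap (tipL nn A)‖, fun Z => ?_⟩
  have h := (LinearMap.toContinuousLinearMap (tipL nn A)).le_opNorm (Z : WithNorm nn)
  have h2 : tip A Z ≤ |tip A Z| := le_abs_self _
  calc tip A Z ≤ |tip A Z| := h2
    _ ≤ _ := h

lemma dual_set_nonempty (A : Fin m → Fin n → ℝ) :
    {r : ℝ | ∃ Z, nn.N Z ≤ 1 ∧ r = tip A Z}.Nonempty :=
  ⟨0, 0, by simp [nn.zero], (tip_zero_right A).symm⟩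

lemma dual_bddAbove (A : Fin m → Fin n → ℝ) :
    BddAbove {r : ℝ | ∃ Z, nn.N Z ≤ 1 ∧ r = tip A Z} := by
  obtain ⟨C, hC⟩ := tip_bound nn A
  refine ⟨max C 0, fun r hr => ?_⟩
  obtain ⟨Z, hZ, rfl⟩ := hr
  calc tip A Z ≤ C * nn.N Z := hC Z
    _ ≤ max C 0 * nn.N Z := mul_le_mul_of_nonneg_right (le_max_left _ _) (nn.nonneg_s11 Z)
    _ ≤ max C 0 * 1 := mul_le_mul_of_nonneg_left hZ (le_max_right _ _)
    _ = max C 0 := mul_one _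

lemma dual_nonneg (A : Fin m → Fin n → ℝ) : 0 ≤ nn.dual A :=
  le_csSup (dual_bddAbove nn A) ⟨0, by simp [nn.zero], (tip_zero_right A).symm⟩

lemma tip_le_dual_mul (A Z : Fin m → Fin n → ℝ) : tip A Z ≤ nn.dual A * nn.N Z := by
  rcases eq_or_ne Z 0 with rfl | hZ
  · simp [tip_zero_right, nn.zero]
  · have hpos : 0 < nn.N Z := nn.pos Z hZ
    have hmem : tip A ((nn.N Z)⁻¹ • Z) ∈ {r : ℝ | ∃ W, nn.N W ≤ 1 ∧ r = tip A W} := by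
      refine ⟨(nn.N Z)⁻¹ • Z, ?_, rfl⟩
      rw [nn.smul, abs_of_nonneg (inv_nonneg.mpr hpos.le), inv_mul_cancel₀ hpos.ne']
    have h := le_csSup (dual_bddAbove nn A) hmem
    rw [tip_smul_right] at h
    have h2 := mul_le_mul_of_nonneg_right h hpos.le
    rw [inv_mul_eq_div, div_mul_cancel₀ _ hpos.ne'] at h2
    exact h2
    
lemma dual_neg (A : Fin m → Fin n → ℝ) : nn.dual (-A) = nn.dual A := by
  unfold MatNorm.dual
  congr 1
  ext r
  constructor
  · rintro ⟨Z, hZ, rfl⟩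
    exact ⟨-Z, by rwa [nn.N_neg], by simp [tip_neg_right, tip, neg_mul]⟩
  · rintro ⟨Z, hZ, rfl⟩
    exact ⟨-Z, by rwa [nn.N_neg], by simp [tip_neg_right, tip, neg_mul]⟩

end Aux

section Descent
variable {p : ℕ} {m n : Fin p → ℕ}

lemma descent (nn : ∀ i, MatNorm (m i) (n i))
    (f : (∀ i, Fin (m i) → Fin (n i) → ℝ) → ℝ)
    (g : (∀ i, Fin (m i) → Fin (n i) → ℝ) → ∀ i, Fin (m i) → Fin (n i) → ℝ)
    (hdiff : ContDiff ℝ 1 f)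
    (hgrad : ∀ X H, fderiv ℝ f X H = ∑ i, tip (g X i) (H i))
    (L0 L1 : Fin p → ℝ)
    (hsmooth : ∀ i X Y, (nn i).dual (g X i - g Y i)
      ≤ (L0 i + L1 i * (nn i).dual (g X i)) * (nn i).N (X i - Y i))
    (Xk Y : ∀ i, Fin (m i) → Fin (n i) → ℝ) :
    f Y ≤ f Xk + (∑ i, tip (g Xk i) (Y i - Xk i))
      + (∑ i, (L0 i + L1 i * (nn i).dual (g Xk i)) * (nn i).N (Y i - Xk i) ^ 2) / 2 := by
  set v := Y - Xk with hv
  set γ : ℝ → ∀ i, Fin (m i) → Fin (n i) → ℝ := fun t => Xk + t • v with hγdef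
  set c : ℝ := ∑ i, (L0 i + L1 i * (nn i).dual (g Xk i)) * (nn i).N (Y i - Xk i) ^ 2 with hc
  have hγ : ∀ t : ℝ, HasDerivAt γ v t := by
    intro t
    have h1 : HasDerivAt (fun t : ℝ => t • v) ((1 : ℝ) • v) t :=
      (hasDerivAt_id t).smul_const v
    simpa [hγdef] using h1.const_add Xk
  have hγcont : Continuous γ := continuous_const.add (continuous_id.smul continuous_const)
  set ψ : ℝ → ℝ := fun t => fderiv ℝ f (γ t) v with hψdef
  have hφ : ∀ t : ℝ, HasDerivAt (fun s => f (γ s)) (ψ t) t := fun t =>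
    ((hdiff.differentiable one_ne_zero (γ t)).hasFDerivAt).comp_hasDerivAt t (hγ t)
  have hψcont : Continuous ψ :=
    (ContinuousLinearMap.apply ℝ ℝ v).continuous.comp
      ((hdiff.continuous_fderiv one_ne_zero).comp hγcont)
  have hγ0 : γ 0 = Xk := by simp [hγdef]
  have hγ1 : γ 1 = Y := by simp [hγdef, hv]
  have key : f Y - f Xk = ∫ t in (0:ℝ)..1, ψ t := by
    have h := intervalIntegral.integral_eq_sub_of_hasDerivAt
      (f := fun s => f (γ s)) (f' := ψ) (a := (0:ℝ)) (b := 1)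
      (fun t _ => hφ t) (hψcont.intervalIntegrable 0 1)
    rw [h]
    simp only [hγ0, hγ1]
  have hψ0 : ψ 0 = ∑ i, tip (g Xk i) (Y i - Xk i) := by
    rw [hψdef]; simp only [hγ0, hgrad]
    exact Finset.sum_congr rfl fun i _ => by rw [hv]; rfl
  have hbound : ∀ t ∈ Set.Icc (0:ℝ) 1, ψ t ≤ ψ 0 + t * c := by
    intro t ht
    have hdiffψ : ψ t - ψ 0 = ∑ i, tip (g (γ t) i - g Xk i) (v i) := by
      rw [hψdef]; simp only [hγ0, hgrad, ← Finset.sum_sub_distrib]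
      exact Finset.sum_congr rfl fun i _ => (tip_sub_left _ _ _).symm
    have hterm : ∀ i, tip (g (γ t) i - g Xk i) (v i)
        ≤ t * ((L0 i + L1 i * (nn i).dual (g Xk i)) * (nn i).N (Y i - Xk i) ^ 2) := by
      intro i
      have h1 : tip (g (γ t) i - g Xk i) (v i)
          ≤ (nn i).dual (g (γ t) i - g Xk i) * (nn i).N (v i) :=
        tip_le_dual_mul (nn i) _ _
      have h2 : (nn i).dual (g (γ t) i - g Xk i) = (nn i).dual (g Xk i - g (γ t) i) := by
        rw [← dual_neg (nn i) (g Xk i - g (γ t) i), neg_sub]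
      have h3 : (nn i).N (Xk i - γ t i) = t * (nn i).N (v i) := by
        have : Xk i - γ t i = -(t • v i) := by
          simp [hγdef, Pi.add_apply, Pi.smul_apply]
        rw [this, (nn i).N_neg, (nn i).smul, abs_of_nonneg ht.1]
      have h4 := hsmooth i Xk (γ t)
      rw [h3] at h4
      have hNv : 0 ≤ (nn i).N (v i) := (nn i).nonneg_s11 _
      have hvi : v i = Y i - Xk i := by rw [hv]; rfl
      calc tip (g (γ t) i - g Xk i) (v i)
          ≤ (nn i).dual (g (γ t) i - g Xk i) * (nn i).N (v i) := h1
        _ = (nn i).dual (g Xk i - g (γ t) i) * (nn i).N (v i) := by rw [h2]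
        _ ≤ ((L0 i + L1 i * (nn i).dual (g Xk i)) * (t * (nn i).N (v i))) * (nn i).N (v i) :=
            mul_le_mul_of_nonneg_right h4 hNv
        _ = t * ((L0 i + L1 i * (nn i).dual (g Xk i)) * (nn i).N (v i) ^ 2) := by ring
        _ = t * ((L0 i + L1 i * (nn i).dual (g Xk i)) * (nn i).N (Y i - Xk i) ^ 2) := by
            rw [hvi]
    have : ψ t - ψ 0 ≤ t * c := by
      rw [hdiffψ, hc, Finset.mul_sum]
      exact Finset.sum_le_sum fun i _ => hterm i
    linarith
  have hint : ∫ t in (0:ℝ)..1, ψ t ≤ ∫ t in (0:ℝ)..1, (ψ 0 + t * c) := by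
    apply intervalIntegral.integral_mono_on (by norm_num)
      (hψcont.intervalIntegrable 0 1)
      ((continuous_const.add (continuous_id.mul continuous_const)).intervalIntegrable 0 1)
    exact hbound
  have hval : ∫ t in (0:ℝ)..1, (ψ 0 + t * c) = ψ 0 + c / 2 := by
    have h1 : IntervalIntegrable (fun t : ℝ => t * c) MeasureTheory.volume 0 1 :=
      ((continuous_id.mul continuous_const : Continuous fun t : ℝ => t * c)).intervalIntegrable 0 1
    rw [intervalIntegral.integral_add intervalIntegrable_const h1,
      intervalIntegral.integral_const, intervalIntegral.integral_mul_const, integral_id]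
    norm_num
    ring
  have := key ▸ (hval ▸ hint)
  rw [hψ0] at this
  linarith

end Descent


section LMO
variable {m n : ℕ}

lemma lmo_tip_le (nn : MatNorm m n) (G C Y : Fin m → Fin n → ℝ) {t : ℝ} (ht : 0 ≤ t)
    (h : IsLMOMin nn G C t Y) : tip G (Y - C) ≤ -(t * nn.dual G) := by
  rcases eq_or_lt_of_le ht with rfl | htpos
  · have hYC : Y - C = 0 := nn.eq_zero_of_N_le_zero h.1
    simp [hYC, tip_zero_right]
  · have hub : ∀ r ∈ {r : ℝ | ∃ Z, nn.N Z ≤ 1 ∧ r = tip G Z}, r ≤ -tip G (Y - C) / t := by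
      rintro r ⟨D, hD, rfl⟩
      have hZmem : nn.N ((C - t • D) - C) ≤ t := by
        have he : (C - t • D) - C = -(t • D) := by abel
        rw [he, nn.N_neg, nn.smul, abs_of_nonneg ht]
        calc t * nn.N D ≤ t * 1 := mul_le_mul_of_nonneg_left hD ht
          _ = t := mul_one t
      have h2 := h.2 _ hZmem
      have h3 : tip G (C - t • D) = tip G C - t * tip G D := by
        rw [tip_sub_right, tip_smul_right]
      have h4 : tip G (Y - C) ≤ -(t * tip G D) := by
        rw [tip_sub_right]; rw [h3] at h2; linarith
      rw [le_div_iff₀ htpos]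
      linarith [h4]
    have h5 : nn.dual G ≤ -tip G (Y - C) / t := csSup_le (dual_set_nonempty nn G) hub
    rw [le_div_iff₀ htpos] at h5
    linarith

lemma lmo_key (nn : MatNorm m n) (G C Y : Fin m → Fin n → ℝ) (a b : ℝ)
    (ha : 0 ≤ a) (hb : 0 ≤ b)
    (h : IsLMOMin nn G C (nn.dual G / (a + b * nn.dual G)) Y) :
    tip G (Y - C) + (a + b * nn.dual G) * nn.N (Y - C) ^ 2 / 2
      ≤ -(nn.dual G ^ 2 / (2 * (a + b * nn.dual G))) := by
  set s := nn.dual G with hs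
  have hs0 : 0 ≤ s := dual_nonneg nn G
  set cv := a + b * s with hcv
  have hcv0 : 0 ≤ cv := by positivity
  rcases eq_or_lt_of_le hcv0 with hc0 | hcpos
  · -- cv = 0 : radius is s/0 = 0, so Y = C and both sides vanish
    have ht0 : s / cv = 0 := by rw [← hc0, div_zero]
    rw [ht0] at h
    have hYC : Y - C = 0 := nn.eq_zero_of_N_le_zero h.1
    rw [hYC, tip_zero_right, nn.zero, ← hc0]
    simp
  · have ht : (0:ℝ) ≤ s / cv := div_nonneg hs0 hcpos.le
    have h1 := lmo_tip_le nn G C Y ht h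
    have h2 : nn.N (Y - C) ^ 2 ≤ (s / cv) ^ 2 :=
      pow_le_pow_left₀ (nn.nonneg_s11 _) h.1 2
    have h3 : cv * nn.N (Y - C) ^ 2 / 2 ≤ cv * (s / cv) ^ 2 / 2 := by
      have := mul_le_mul_of_nonneg_left h2 hcpos.le
      linarith
    have heq : -((s / cv) * s) + cv * (s / cv) ^ 2 / 2 = -(s ^ 2 / (2 * cv)) := by
      field_simp
      ring
    linarith

end LMO

/-- Telescoped descent of deterministic Gluon with adaptive stepsizes
`tᵢᵏ = ‖∇ᵢf(Xᵏ)‖⋆/(L⁰ᵢ + L¹ᵢ‖∇ᵢf(Xᵏ)‖⋆)`: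
`Σ_{k<K} Σᵢ ‖∇ᵢf(Xᵏ)‖⋆²/(2(L⁰ᵢ + L¹ᵢ‖∇ᵢf(Xᵏ)‖⋆)) ≤ f(X⁰) − f^inf`. -/
theorem stmt_11 {p : ℕ} {m n : Fin p → ℕ}
    (nn : ∀ i, MatNorm (m i) (n i))
    (f : (∀ i, Fin (m i) → Fin (n i) → ℝ) → ℝ)
    (g : (∀ i, Fin (m i) → Fin (n i) → ℝ) → ∀ i, Fin (m i) → Fin (n i) → ℝ)
    (hdiff : ContDiff ℝ 1 f)
    (hgrad : ∀ X H, fderiv ℝ f X H = ∑ i, tip (g X i) (H i))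
    (L0 L1 : Fin p → ℝ) (hL0 : ∀ i, 0 ≤ L0 i) (hL1 : ∀ i, 0 ≤ L1 i)
    (hsmooth : ∀ i X Y, (nn i).dual (g X i - g Y i)
      ≤ (L0 i + L1 i * (nn i).dual (g X i)) * (nn i).N (X i - Y i))
    (finf : ℝ) (hfinf : IsGLB (Set.range f) finf)
    (X : ℕ → ∀ i, Fin (m i) → Fin (n i) → ℝ)
    (hupd : ∀ k i, IsLMOMin (nn i) (g (X k) i) (X k i)
      ((nn i).dual (g (X k) i) / (L0 i + L1 i * (nn i).dual (g (X k) i)))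
      (X (k + 1) i))
    (K : ℕ) :
    ∑ k ∈ Finset.range K, ∑ i, ((nn i).dual (g (X k) i)) ^ 2
        / (2 * (L0 i + L1 i * (nn i).dual (g (X k) i)))
      ≤ f (X 0) - finf := by
  have hstep : ∀ k, f (X (k+1)) ≤ f (X k) - ∑ i, ((nn i).dual (g (X k) i)) ^ 2
      / (2 * (L0 i + L1 i * (nn i).dual (g (X k) i))) := by
    intro k
    have hd := descent nn f g hdiff hgrad L0 L1 hsmooth (X k) (X (k+1))
    have hsum : (∑ i, tip (g (X k) i) (X (k+1) i - X k i))
        + (∑ i, (L0 i + L1 i * (nn i).dual (g (X k) i))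
            * (nn i).N (X (k+1) i - X k i) ^ 2) / 2
        ≤ -∑ i, ((nn i).dual (g (X k) i)) ^ 2
            / (2 * (L0 i + L1 i * (nn i).dual (g (X k) i))) := by
      rw [Finset.sum_div, ← Finset.sum_add_distrib, ← Finset.sum_neg_distrib]
      refine Finset.sum_le_sum fun i _ => ?_
      exact lmo_key (nn i) (g (X k) i) (X k i) (X (k+1) i) (L0 i) (L1 i)
        (hL0 i) (hL1 i) (hupd k i)
    linarith
  have htel : ∀ K : ℕ, (∑ k ∈ Finset.range K, ∑ i, ((nn i).dual (g (X k) i)) ^ 2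
      / (2 * (L0 i + L1 i * (nn i).dual (g (X k) i)))) ≤ f (X 0) - f (X K) := by
    intro K
    induction K with
    | zero => simp
    | succ K ih =>
      rw [Finset.sum_range_succ]
      have := hstep K
      linarith
  have hlb : finf ≤ f (X K) := hfinf.1 ⟨X K, rfl⟩
  linarith [htel K]
end
end
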